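/- Let f : [0,1] → [0,1] be a continuous surjective single-valued map and let F = f^{-1} : [0,1] → 2^{[0,1]} be its set-valued inverse, F(x) = {y : f(y) = x}. Then F is topologically mixing if and only if F has the specification property. -/

import Mathlib

open Set

namespace BlokhAux

def II (s : Set ℝ) : Prop := ∃ a b : ℝ, a ≤ b ∧ s = Icc a b

lemma II_Icc {a b : ℝ} (h : a ≤ b) : II (Icc a b) := ⟨a, b, h, rfl⟩

lemma II.nonempty {s} (h : II s) : s.Nonempty := by
  obtain ⟨a, b, hab, rfl⟩ := h; exact nonempty_Icc.2 hab

lemma II.image {g : ℝ → ℝ} (hg : Continuous g) {s} (h : II s) : II (g '' s) := by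
  obtain ⟨a, b, hab, rfl⟩ := h
  rw [hg.continuousOn.image_Icc hab]
  refine ⟨sInf (g '' Icc a b), sSup (g '' Icc a b), ?_, rfl⟩
  exact Real.sInf_le_sSup _ (isCompact_Icc.image hg).bddBelow (isCompact_Icc.image hg).bddAbove

lemma pull_aux {h : ℝ → ℝ} (hc : Continuous h) {p q u v : ℝ} (hpq : p ≤ q)
    (hu : h p = u) (hv : h q = v) (huv : u ≤ v) :
    ∃ s t, p ≤ s ∧ s ≤ t ∧ t ≤ q ∧ h '' Icc s t = Icc u v := by
  set T : Set ℝ := {x ∈ Icc p q | h x = v} with hT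
  have hTne : T.Nonempty := ⟨q, ⟨right_mem_Icc.2 hpq, hv⟩⟩
  have hTcl : IsClosed T := isClosed_Icc.inter (isClosed_eq hc continuous_const)
  have hTbd : BddBelow T := ⟨p, fun x hx => hx.1.1⟩
  set t := sInf T with ht
  have htT : t ∈ T := hTcl.csInf_mem hTne hTbd
  have hpt : p ≤ t := htT.1.1
  have htq : t ≤ q := htT.1.2
  have hht : h t = v := htT.2
  set S : Set ℝ := {x ∈ Icc p t | h x = u} with hS
  have hSne : S.Nonempty := ⟨p, ⟨left_mem_Icc.2 hpt, hu⟩⟩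
  have hScl : IsClosed S := isClosed_Icc.inter (isClosed_eq hc continuous_const)
  have hSbd : BddAbove S := ⟨t, fun x hx => hx.1.2⟩
  set s := sSup S with hs
  have hsS : s ∈ S := hScl.csSup_mem hSne hSbd
  have hps : p ≤ s := hsS.1.1
  have hst : s ≤ t := hsS.1.2
  have hhs : h s = u := hsS.2
  refine ⟨s, t, hps, hst, htq, ?_⟩
  apply Subset.antisymm
  · rintro y ⟨x, hx, rfl⟩
    constructor
    · by_contra hlt
      push_neg at hlt
      have : u ∈ Icc (h x) (h t) := ⟨hlt.le, hht ▸ huv⟩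
      obtain ⟨y, hy, hyu⟩ := intermediate_value_Icc hx.2 hc.continuousOn this
      have hyS : y ∈ S := ⟨⟨le_trans hps (le_trans hx.1 hy.1), hy.2⟩, hyu⟩
      have : y ≤ s := le_csSup hSbd hyS
      have hxs : s < x := lt_of_le_of_ne hx.1 (fun h' => by
        rw [← h', hhs] at hlt; exact lt_irrefl _ hlt)
      linarith [hy.1]
    · by_contra hlt
      push_neg at hlt
      have : v ∈ Icc (h s) (h x) := ⟨hhs ▸ huv, hlt.le⟩
      obtain ⟨y, hy, hyv⟩ := intermediate_value_Icc hx.1 hc.continuousOn this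
      have hyT : y ∈ T := ⟨⟨le_trans hps hy.1, le_trans hy.2 (le_trans hx.2 htq)⟩, hyv⟩
      have : t ≤ y := csInf_le hTbd hyT
      have hxt : x < t := lt_of_le_of_ne hx.2 (fun h' => by
        rw [h', hht] at hlt; exact lt_irrefl _ hlt)
      linarith [hy.2]
  · have := intermediate_value_Icc hst hc.continuousOn
    rw [hhs, hht] at this
    exact this

lemma pullback {g : ℝ → ℝ} (hg : Continuous g) {A : Set ℝ} (hA : II A) {u v : ℝ} (huv : u ≤ v)
    (hsub : Icc u v ⊆ g '' A) : ∃ B, II B ∧ B ⊆ A ∧ g '' B = Icc u v := by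
  obtain ⟨a, b, hab, rfl⟩ := hA
  obtain ⟨xu, hxu, hxu'⟩ := hsub (left_mem_Icc.2 huv)
  obtain ⟨xv, hxv, hxv'⟩ := hsub (right_mem_Icc.2 huv)
  rcases le_total xu xv with hle | hle
  · obtain ⟨s, t, h1, h2, h3, h4⟩ := pull_aux hg hle hxu' hxv' huv
    exact ⟨Icc s t, II_Icc h2,
      Icc_subset_Icc (le_trans hxu.1 h1) (le_trans h3 hxv.2), h4⟩
  · set r : ℝ → ℝ := fun x => xv + xu - x with hr
    have hrc : Continuous r := by fun_prop
    have h1 : (g ∘ r) xv = u := by simp [hr, Function.comp, hxu']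
    have h2 : (g ∘ r) xu = v := by simp [hr, Function.comp]; simpa using hxv'
    obtain ⟨s, t, hs1, hs2, hs3, hs4⟩ := pull_aux (hg.comp hrc) hle h1 h2 huv
    refine ⟨r '' Icc s t, ?_, ?_, ?_⟩
    · have : r '' Icc s t = Icc (xv + xu - t) (xv + xu - s) := by
        simpa [hr] using image_const_sub_Icc (xv + xu) s t
      rw [this]; exact II_Icc (by linarith)
    · rintro y ⟨x, hx, rfl⟩
      constructor
      · simp only [hr]; have := hxv.1; have := hs3; have := hx.2; linarith
      · simp only [hr]; have := hxu.2; have := hs1; have := hx.1; linarith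
    · rw [← image_comp]; exact hs4

lemma chain_periodic {g : ℝ → ℝ} (hg : Continuous g) {C : ℕ → Set ℝ} {P : ℕ}
    (hII : ∀ k ≤ P, II (C k)) (hcov : ∀ k < P, C (k + 1) ⊆ g '' (C k)) (hloop : C 0 ⊆ C P) :
    ∃ p, g^[P] p = p ∧ ∀ k ≤ P, g^[k] p ∈ C k := by
  -- build exact pullback chain E with E 0 = C 0, E d ⊆ C (P - d), g '' E (d+1) = E d
  have main : ∀ d ≤ P, ∃ E : ℕ → Set ℝ, E 0 = C 0 ∧
      (∀ e ≤ d, II (E e) ∧ E e ⊆ C (P - e)) ∧ (∀ e < d, g '' E (e + 1) = E e) := by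
    intro d
    induction d with
    | zero =>
      intro _
      exact ⟨fun _ => C 0, rfl, fun e he => by
        simp only [Nat.le_zero] at he; subst he
        exact ⟨hII 0 (Nat.zero_le P), by simpa using hloop⟩, fun e he => absurd he (Nat.not_lt_zero e)⟩
    | succ d ih =>
      intro hd1
      obtain ⟨E, hE0, hEp, hEr⟩ := ih (le_of_lt hd1)
      have hdP : d < P := hd1
      have hsub : E d ⊆ g '' C (P - (d + 1)) := by
        have h1 : E d ⊆ C (P - d) := (hEp d le_rfl).2
        have h2 : C (P - d) ⊆ g '' C (P - (d + 1)) := by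
          have harith : P - (d + 1) + 1 = P - d := by omega
          have hc := hcov (P - (d + 1)) (by omega)
          rwa [harith] at hc
        exact h1.trans h2
      obtain ⟨u, v, huv, hEd⟩ := (hEp d le_rfl).1
      obtain ⟨B, hBII, hBsub, hBim⟩ := pullback hg (hII (P - (d + 1)) (by omega)) huv (hEd ▸ hsub)
      refine ⟨Function.update E (d + 1) B, ?_, ?_, ?_⟩
      · rw [Function.update_of_ne (by omega : (0:ℕ) ≠ d + 1)]; exact hE0
      · intro e he
        by_cases h : e = d + 1
        · subst h
          rw [Function.update_self]
          exact ⟨hBII, hBsub⟩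
        · rw [Function.update_of_ne h]
          exact hEp e (by omega)
      · intro e he
        by_cases h : e + 1 = d + 1
        · have hed : e = d := by omega
          subst hed
          rw [Function.update_self, Function.update_of_ne (by omega : e ≠ e + 1)]
          rw [hBim, ← hEd]
        · rw [Function.update_of_ne h, Function.update_of_ne (by omega : e ≠ d + 1)]
          exact hEr e (by omega)
  obtain ⟨E, hE0, hEp, hEr⟩ := main P le_rfl
  -- iterate images
  have hiter : ∀ k ≤ P, g^[k] '' E P = E (P - k) := by
    intro k
    induction k with
    | zero => intro _; simp
    | succ k ih =>
      intro hk
      have h1 : g^[k + 1] '' E P = g '' (g^[k] '' E P) := by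
        rw [Function.iterate_succ', image_comp]
      rw [h1, ih (by omega)]
      have h2 : P - k = (P - (k + 1)) + 1 := by omega
      rw [h2]
      exact hEr (P - (k + 1)) (by omega)
  have hfull : g^[P] '' E P = C 0 := by
    have := hiter P le_rfl
    simpa [hE0] using this
  obtain ⟨β₁, β₂, hβ, hEP⟩ := (hEp P le_rfl).1
  have hEPC0 : E P ⊆ C 0 := by simpa using (hEp P le_rfl).2
  obtain ⟨γ₁, γ₂, hγ, hC0⟩ := hII 0 (Nat.zero_le P)
  have hq : Continuous (g^[P]) := hg.iterate P
  have himg : g^[P] '' Icc β₁ β₂ = Icc γ₁ γ₂ := by rw [← hEP, ← hC0]; exact hfull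
  have hmem : Icc β₁ β₂ ⊆ Icc γ₁ γ₂ := by rw [← hEP, ← hC0]; exact hEPC0
  have hγβ : γ₁ ≤ β₁ ∧ β₂ ≤ γ₂ := by
    have h1 := hmem (left_mem_Icc.2 hβ)
    have h2 := hmem (right_mem_Icc.2 hβ)
    exact ⟨h1.1, h2.2⟩
  obtain ⟨a, ha, ha'⟩ : ∃ a ∈ Icc β₁ β₂, g^[P] a = γ₁ := by
    have : γ₁ ∈ g^[P] '' Icc β₁ β₂ := by rw [himg]; exact left_mem_Icc.2 hγ
    obtain ⟨a, h1, h2⟩ := this; exact ⟨a, h1, h2⟩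
  obtain ⟨b, hb, hb'⟩ : ∃ b ∈ Icc β₁ β₂, g^[P] b = γ₂ := by
    have : γ₂ ∈ g^[P] '' Icc β₁ β₂ := by rw [himg]; exact right_mem_Icc.2 hγ
    obtain ⟨b, h1, h2⟩ := this; exact ⟨b, h1, h2⟩
  have key : ∃ p ∈ uIcc a b, g^[P] p - p = 0 := by
    have hc : ContinuousOn (fun x => g^[P] x - x) (uIcc a b) :=
      (hq.sub continuous_id).continuousOn
    apply intermediate_value_uIcc hc
    have h1 : g^[P] a - a ≤ 0 := by have := ha.1; have := hγβ.1; linarith [ha']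
    have h2 : 0 ≤ g^[P] b - b := by have := hb.2; have := hγβ.2; linarith [hb']
    exact mem_uIcc.2 (Or.inl ⟨h1, h2⟩)
  obtain ⟨p, hp, hp'⟩ := key
  have hpE : p ∈ E P := by
    rw [hEP]
    have : uIcc a b ⊆ Icc β₁ β₂ := uIcc_subset_Icc ha hb
    exact this hp
  refine ⟨p, by linarith [hp'] , ?_⟩
  intro k hk
  have : g^[k] p ∈ g^[k] '' E P := mem_image_of_mem _ hpE
  rw [hiter k hk] at this
  have h2 := (hEp (P - k) (by omega)).2 this
  have : P - (P - k) = k := by omega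
  rwa [this] at h2

def MapsI (g : ℝ → ℝ) : Prop := ∀ x ∈ Icc (0:ℝ) 1, g x ∈ Icc (0:ℝ) 1

def Mix (g : ℝ → ℝ) : Prop := ∀ l₁ r₁ l₂ r₂ : ℝ, 0 ≤ l₁ → l₁ < r₁ → r₁ ≤ 1 →
  0 ≤ l₂ → l₂ < r₂ → r₂ ≤ 1 →
  ∃ N : ℕ, ∀ n ≥ N, ∃ x ∈ Ioo l₁ r₁, g^[n] x ∈ Ioo l₂ r₂

lemma MapsI.iter {g : ℝ → ℝ} (hm : MapsI g) (n : ℕ) : MapsI (g^[n]) := by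
  induction n with
  | zero => intro x hx; simpa using hx
  | succ n ih =>
    intro x hx
    rw [Function.iterate_succ']
    exact hm _ (ih x hx)

lemma MapsI.image_subset {g : ℝ → ℝ} (hm : MapsI g) {s : Set ℝ} (hs : s ⊆ Icc 0 1) :
    g '' s ⊆ Icc 0 1 := by
  rintro y ⟨x, hx, rfl⟩; exact hm x (hs hx)

lemma not_inv_upper {g : ℝ → ℝ} (hm : MapsI g) (hmix : Mix g) {s : ℝ}
    (h0 : 0 < s) (h1 : s < 1) (hinv : ∀ x, s ≤ x → x ≤ 1 → s ≤ g x) : False := by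
  obtain ⟨N, hN⟩ := hmix s 1 0 s h0.le h1 le_rfl le_rfl h0 h1.le
  obtain ⟨x, hx, hgx⟩ := hN N le_rfl
  have hstay : ∀ k : ℕ, s ≤ g^[k] x ∧ g^[k] x ≤ 1 := by
    intro k
    induction k with
    | zero => exact ⟨hx.1.le, hx.2.le⟩
    | succ k ih =>
      rw [Function.iterate_succ']
      constructor
      · exact hinv _ ih.1 ih.2
      · exact (hm _ ⟨le_trans h0.le ih.1, ih.2⟩).2
  exact absurd (hstay N).1 (not_le.2 hgx.2)

lemma not_inv_lower {g : ℝ → ℝ} (hm : MapsI g) (hmix : Mix g) {s : ℝ}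
    (h0 : 0 < s) (h1 : s < 1) (hinv : ∀ x, 0 ≤ x → x ≤ s → g x ≤ s) : False := by
  obtain ⟨N, hN⟩ := hmix 0 s s 1 le_rfl h0 h1.le h0.le h1 le_rfl
  obtain ⟨x, hx, hgx⟩ := hN N le_rfl
  have hstay : ∀ k : ℕ, 0 ≤ g^[k] x ∧ g^[k] x ≤ s := by
    intro k
    induction k with
    | zero => exact ⟨hx.1.le, hx.2.le⟩
    | succ k ih =>
      rw [Function.iterate_succ']
      constructor
      · exact (hm _ ⟨ih.1, le_trans ih.2 h1.le⟩).1
      · exact hinv _ ih.1 ih.2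
  exact absurd (hstay N).2 (not_le.2 hgx.1)

lemma II_pair_subset {S : Set ℝ} (hS : II S) {u w l r : ℝ} (hu : u ∈ S) (hw : w ∈ S)
    (hl : u ≤ l) (hr : r ≤ w) : Icc l r ⊆ S := by
  obtain ⟨a, b, hab, rfl⟩ := hS
  exact Icc_subset_Icc (le_trans hu.1 hl) (le_trans hr hw.2)

lemma reach_base {g : ℝ → ℝ} (hg : Continuous g) (hmix : Mix g) {δ τ : ℝ}
    (hδ : 0 < δ) (hτ : 0 < τ) (hτ2 : τ < 1/2) :
    ∃ N : ℕ, ∀ a b : ℝ, 0 ≤ a → a + δ ≤ b → b ≤ 1 → ∀ n ≥ N,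
      Icc τ (1 - τ) ⊆ g^[n] '' Icc a b := by
  have key : ∀ k : ℕ, ∃ Nk : ℕ, (k * (δ/4) + δ/2 ≤ 1) → ∀ n ≥ Nk,
      (∃ x ∈ Ioo (k * (δ/4) + δ/4) (k * (δ/4) + δ/2), g^[n] x ∈ Ioo 0 τ) ∧
      (∃ y ∈ Ioo (k * (δ/4) + δ/4) (k * (δ/4) + δ/2), g^[n] y ∈ Ioo (1 - τ) 1) := by
    intro k
    by_cases hk : k * (δ/4) + δ/2 ≤ 1
    · have hl0 : (0:ℝ) ≤ k * (δ/4) + δ/4 := by positivity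
      have hlt : k * (δ/4) + δ/4 < k * (δ/4) + δ/2 := by linarith
      obtain ⟨N₁, hN₁⟩ := hmix _ _ 0 τ hl0 hlt hk le_rfl hτ (by linarith)
      obtain ⟨N₂, hN₂⟩ := hmix _ _ (1 - τ) 1 hl0 hlt hk (by linarith) (by linarith) le_rfl
      exact ⟨max N₁ N₂, fun _ n hn =>
        ⟨hN₁ n (le_trans (le_max_left _ _) hn), hN₂ n (le_trans (le_max_right _ _) hn)⟩⟩
    · exact ⟨0, fun h => absurd h hk⟩
  choose Nk hNk using key
  set K : ℕ := ⌈(4:ℝ)/δ⌉₊ with hK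
  refine ⟨(Finset.range (K + 1)).sup Nk, ?_⟩
  intro a b ha hab hb1 n hn
  set k : ℕ := ⌊4 * a / δ⌋₊ with hkdef
  have hk1 : (k : ℝ) * (δ/4) ≤ a := by
    have h1 : (k : ℝ) ≤ 4 * a / δ := Nat.floor_le (by positivity)
    calc (k : ℝ) * (δ/4) ≤ (4 * a / δ) * (δ/4) := by
          apply mul_le_mul_of_nonneg_right h1; positivity
      _ = a := by field_simp
  have hk2 : a < (k : ℝ) * (δ/4) + δ/4 := by
    have h1 : 4 * a / δ < k + 1 := Nat.lt_floor_add_one _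
    have h2 : 4 * a / δ * (δ/4) < ((k:ℝ) + 1) * (δ/4) := by
      apply mul_lt_mul_of_pos_right h1; positivity
    have h3 : 4 * a / δ * (δ/4) = a := by field_simp
    linarith
  have hcell : Ioo ((k:ℝ) * (δ/4) + δ/4) ((k:ℝ) * (δ/4) + δ/2) ⊆ Icc a b := by
    intro x hx
    constructor
    · linarith [hx.1]
    · have := hx.2; linarith
  have hkK : k ∈ Finset.range (K + 1) := by
    rw [Finset.mem_range]
    have h1 : 4 * a / δ ≤ 4 / δ := by gcongr <;> linarith
    have h2 : k ≤ K := le_trans (Nat.floor_mono h1) (Nat.floor_le_ceil _)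
    omega
  have hkle : (k * (δ/4) : ℝ) + δ/2 ≤ 1 := by
    have : a + δ/2 ≤ 1 := by linarith
    linarith
  have hnk : n ≥ Nk k := le_trans (Finset.le_sup hkK) hn
  obtain ⟨⟨x, hx, hgx⟩, ⟨y, hy, hgy⟩⟩ := hNk k hkle n hnk
  have hII : II (g^[n] '' Icc a b) := II.image (hg.iterate n) ⟨a, b, by linarith, rfl⟩
  have hxm : g^[n] x ∈ g^[n] '' Icc a b := mem_image_of_mem _ (hcell hx)
  have hym : g^[n] y ∈ g^[n] '' Icc a b := mem_image_of_mem _ (hcell hy)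
  exact II_pair_subset hII hxm hym hgx.2.le hgy.1.le

def Acc0 (g : ℝ → ℝ) : Prop := ∃ p, 0 < p ∧ p < 1 ∧ ∃ k : ℕ, g^[k] p = 0
def Acc1 (g : ℝ → ℝ) : Prop := ∃ p, 0 < p ∧ p < 1 ∧ ∃ k : ℕ, g^[k] p = 1

def SurjI (g : ℝ → ℝ) : Prop := ∀ y ∈ Icc (0:ℝ) 1, ∃ x ∈ Icc (0:ℝ) 1, g x = y

lemma reach_full {g : ℝ → ℝ} (hg : Continuous g) (hmix : Mix g) {δ τ : ℝ}
    (hδ : 0 < δ) (hτ : 0 < τ) (hτ2 : τ < 1/2) :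
    ∃ (lo hi : ℝ) (N : ℕ), 0 ≤ lo ∧ lo ≤ τ ∧ 1 - τ ≤ hi ∧ hi ≤ 1 ∧
      (Acc0 g → lo = 0) ∧ (Acc1 g → hi = 1) ∧
      ∀ a b : ℝ, 0 ≤ a → a + δ ≤ b → b ≤ 1 → ∀ n ≥ N,
        Icc lo hi ⊆ g^[n] '' Icc a b := by
  classical
  obtain ⟨Nb, hNb⟩ := reach_base hg hmix hδ hτ hτ2
  set lo := if Acc0 g then (0:ℝ) else τ with hlo
  set hi := if Acc1 g then (1:ℝ) else 1 - τ with hhi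
  have hend0 : ∃ N₀ : ℕ, ∀ a b : ℝ, 0 ≤ a → a + δ ≤ b → b ≤ 1 → ∀ n ≥ N₀ + Nb,
      lo ∈ g^[n] '' Icc a b := by
    by_cases hA : Acc0 g
    · obtain ⟨p₀, hp0, hp1, k₀, hk₀⟩ := id hA
      have hm2 : 0 < min p₀ (1 - p₀) / 2 := by
        have := lt_min hp0 (by linarith : (0:ℝ) < 1 - p₀); positivity
      have hm3 : min p₀ (1 - p₀) / 2 < 1/2 := by
        have h1 : min p₀ (1 - p₀) ≤ p₀ := min_le_left _ _
        linarith
      obtain ⟨N₁, hN₁⟩ := reach_base hg hmix hδ hm2 hm3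
      refine ⟨N₁ + k₀, ?_⟩
      intro a b ha hab hb n hn
      have h1 : p₀ ∈ g^[n - k₀] '' Icc a b := by
        apply hN₁ a b ha hab hb (n - k₀) (by omega)
        constructor
        · exact le_trans (by linarith [min_le_left p₀ (1 - p₀)]) le_rfl
        · have := min_le_right p₀ (1 - p₀); linarith
      have h2 : (0:ℝ) ∈ g^[k₀] '' (g^[n - k₀] '' Icc a b) := by
        refine ⟨p₀, h1, hk₀⟩
      rw [← image_comp, ← Function.iterate_add] at h2
      have he : k₀ + (n - k₀) = n := by omega
      rw [he] at h2
      simpa [hlo, if_pos hA] using h2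
    · refine ⟨0, ?_⟩
      intro a b ha hab hb n hn
      have := hNb a b ha hab hb n (by omega)
      have hmem : τ ∈ Icc τ (1 - τ) := ⟨le_rfl, by linarith⟩
      simpa [hlo, if_neg hA] using this hmem
  have hend1 : ∃ N₀ : ℕ, ∀ a b : ℝ, 0 ≤ a → a + δ ≤ b → b ≤ 1 → ∀ n ≥ N₀ + Nb,
      hi ∈ g^[n] '' Icc a b := by
    by_cases hA : Acc1 g
    · obtain ⟨p₀, hp0, hp1, k₀, hk₀⟩ := id hA
      have hm2 : 0 < min p₀ (1 - p₀) / 2 := by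
        have := lt_min hp0 (by linarith : (0:ℝ) < 1 - p₀); positivity
      have hm3 : min p₀ (1 - p₀) / 2 < 1/2 := by
        have h1 : min p₀ (1 - p₀) ≤ p₀ := min_le_left _ _
        linarith
      obtain ⟨N₁, hN₁⟩ := reach_base hg hmix hδ hm2 hm3
      refine ⟨N₁ + k₀, ?_⟩
      intro a b ha hab hb n hn
      have h1 : p₀ ∈ g^[n - k₀] '' Icc a b := by
        apply hN₁ a b ha hab hb (n - k₀) (by omega)
        constructor
        · exact le_trans (by linarith [min_le_left p₀ (1 - p₀)]) le_rfl
        · have := min_le_right p₀ (1 - p₀); linarith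
      have h2 : (1:ℝ) ∈ g^[k₀] '' (g^[n - k₀] '' Icc a b) := ⟨p₀, h1, hk₀⟩
      rw [← image_comp, ← Function.iterate_add] at h2
      have he : k₀ + (n - k₀) = n := by omega
      rw [he] at h2
      simpa [hhi, if_pos hA] using h2
    · refine ⟨0, ?_⟩
      intro a b ha hab hb n hn
      have := hNb a b ha hab hb n (by omega)
      have hmem : 1 - τ ∈ Icc τ (1 - τ) := ⟨by linarith, le_rfl⟩
      simpa [hhi, if_neg hA] using this hmem
  obtain ⟨N₀, hN₀⟩ := hend0
  obtain ⟨N₁, hN₁⟩ := hend1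
  refine ⟨lo, hi, (N₀ + Nb) + (N₁ + Nb), ?_, ?_, ?_, ?_, ?_, ?_, ?_⟩
  · rw [hlo]; split <;> [rfl; exact hτ.le] 
  · rw [hlo]; split <;> [exact hτ.le; rfl]
  · rw [hhi]; split <;> [linarith; rfl]
  · rw [hhi]; split <;> [rfl; linarith]
  · intro h; rw [hlo, if_pos h]
  · intro h; rw [hhi, if_pos h]
  · intro a b ha hab hb n hn
    have hIIi : II (g^[n] '' Icc a b) := II.image (hg.iterate n) ⟨a, b, by linarith, rfl⟩
    exact II_pair_subset hIIi (hN₀ a b ha hab hb n (by omega)) (hN₁ a b ha hab hb n (by omega))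
      le_rfl le_rfl

lemma rho_exists {g : ℝ → ℝ} (hg : Continuous g) (hm : MapsI g) (hmix : Mix g)
    (hs : SurjI g) (h0 : g 0 = 0) {α : ℝ} (hα : 0 < α) (hα1 : α < 1) :
    ∃ ρ, 0 < ρ ∧ ρ ≤ α ∧ (∀ x, 0 ≤ x → x < ρ → g x ≤ α) ∧ α ≤ g ρ := by
  set S : Set ℝ := {x | x ∈ Icc (0:ℝ) 1 ∧ α < g x} with hS
  have hSne : S.Nonempty := by
    obtain ⟨x, hx, hgx⟩ := hs 1 ⟨zero_le_one, le_rfl⟩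
    exact ⟨x, hx, by rw [hgx]; exact hα1⟩
  have hSbd : BddBelow S := ⟨0, fun x hx => hx.1.1⟩
  set ρ := sInf S with hρ
  have hρmem : ∀ x ∈ S, ρ ≤ x := fun x hx => csInf_le hSbd hx
  have hρlow : ∀ x, 0 ≤ x → x < ρ → g x ≤ α := by
    intro x hx hxρ
    by_contra h
    push_neg at h
    have hx1 : x ≤ 1 := by
      by_contra h1
      push_neg at h1
      obtain ⟨y, hyS⟩ := hSne
      have := hρmem y hyS
      have := hyS.1.2
      linarith
    exact absurd (hρmem x ⟨⟨hx, hx1⟩, h⟩) (not_le.2 hxρ)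
  have hρpos : 0 < ρ := by
    have hcont : ContinuousAt g 0 := hg.continuousAt
    have : ∀ᶠ x in nhds (0:ℝ), g x < α := by
      have : Iio α ∈ nhds (g 0) := by rw [h0]; exact Iio_mem_nhds hα
      exact hcont.eventually_mem this
    obtain ⟨η, hη, hball⟩ := Metric.eventually_nhds_iff.1 this
    apply lt_of_lt_of_le (half_pos hη)
    apply le_csInf hSne
    intro x hx
    by_contra hlt
    push_neg at hlt
    have : dist x 0 < η := by
      rw [Real.dist_eq, sub_zero, abs_of_nonneg hx.1.1]
      linarith
    exact absurd hx.2 (not_lt.2 (hball this).le)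
  have hρα : ρ ≤ α := by
    by_contra h
    push_neg at h
    refine not_inv_lower hm hmix hα hα1 ?_
    intro x hx hxα
    exact hρlow x hx (lt_of_le_of_lt hxα h)
  have hgρ : α ≤ g ρ := by
    by_contra h
    push_neg at h
    have hcont : ContinuousAt g ρ := hg.continuousAt
    have : ∀ᶠ x in nhds ρ, g x < α := by
      exact hcont.eventually_mem (Iio_mem_nhds h)
    obtain ⟨η, hη, hball⟩ := Metric.eventually_nhds_iff.1 this
    obtain ⟨x, hx, hxlt⟩ := (Real.lt_sInf_add_pos hSne hη)
    have hdist : dist x ρ < η := by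
      rw [Real.dist_eq, abs_of_nonneg (by linarith [hρmem x hx])]
      linarith [hρmem x hx]
    exact absurd hx.2 (not_lt.2 (hball hdist).le)
  exact ⟨ρ, hρpos, hρα, hρlow, hgρ⟩

lemma gadget0 {g : ℝ → ℝ} (hg : Continuous g) (hm : MapsI g) (hmix : Mix g)
    (hz : ∀ x ∈ Icc (0:ℝ) 1, g x = 0 → x = 0)
    {α β ρ : ℝ} (hα1 : α < 1) (hβ : 0 < β) (hβρ : β ≤ ρ) (hρα : ρ ≤ α) (hρ0 : 0 < ρ)
    (hgρ : α ≤ g ρ) :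
    ∃ l, 0 < l ∧ l ≤ β ∧ Icc l α ⊆ g '' Icc l α := by
  have hα : 0 < α := lt_of_lt_of_le (lt_of_lt_of_le hβ hβρ) hρα
  -- m₀ := min of g on [α,1] is positive
  have himg : g '' Icc α 1 = Icc (sInf (g '' Icc α 1)) (sSup (g '' Icc α 1)) :=
    hg.continuousOn.image_Icc hα1.le
  set m₀ := sInf (g '' Icc α 1) with hm₀
  have hm₀mem : m₀ ∈ g '' Icc α 1 := by
    rw [himg]; exact left_mem_Icc.2 (Real.sInf_le_sSup _ (isCompact_Icc.image hg).bddBelow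
      (isCompact_Icc.image hg).bddAbove)
  obtain ⟨x₀, hx₀, hgx₀⟩ := hm₀mem
  have hm₀pos : 0 < m₀ := by
    rcases lt_or_eq_of_le (hm x₀ ⟨le_trans hα.le hx₀.1, hx₀.2⟩).1 with h | h
    · rw [← hgx₀]; exact h
    · exfalso
      have := hz x₀ ⟨le_trans hα.le hx₀.1, hx₀.2⟩ h.symm
      rw [this] at hx₀
      exact absurd hx₀.1 (not_le.2 hα)
  have hm₀le : ∀ x, α ≤ x → x ≤ 1 → m₀ ≤ g x := by
    intro x h1 h2
    exact csInf_le (isCompact_Icc.image hg).bddBelow ⟨x, ⟨h1, h2⟩, rfl⟩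
  -- main dichotomy
  have main : ∃ l, 0 < l ∧ l ≤ β ∧ sInf (g '' Icc l α) ≤ l := by
    by_contra hcon
    push_neg at hcon
    have key : ∀ x, 0 < x → x ≤ α → min x β < g x := by
      intro x hx hxα
      have hlβ : min x β ≤ β := min_le_right _ _
      have hl0 : 0 < min x β := lt_min hx hβ
      have := hcon (min x β) hl0 hlβ
      have hxmem : g x ∈ g '' Icc (min x β) α := ⟨x, ⟨min_le_left _ _, hxα⟩, rfl⟩
      have := lt_of_lt_of_le this (csInf_le (isCompact_Icc.image hg).bddBelow hxmem)
      exact this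
    set μ := min β m₀ with hμ
    have hμpos : 0 < μ := lt_min hβ hm₀pos
    have hμ1 : μ < 1 := lt_of_le_of_lt (le_trans (min_le_left _ _) (le_trans hβρ hρα)) hα1
    refine not_inv_upper hm hmix hμpos hμ1 ?_
    intro x hx h1
    rcases le_or_gt x α with hc | hc
    · have hk := key x (lt_of_lt_of_le hμpos hx) hc
      have h2 : μ ≤ min x β := le_min hx (min_le_left _ _)
      linarith
    · exact le_trans (min_le_right _ _) (hm₀le x hc.le h1)
  obtain ⟨l, hl0, hlβ, hlinf⟩ := main
  have hlα : l ≤ α := le_trans hlβ (le_trans hβρ hρα)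
  have himg2 : g '' Icc l α = Icc (sInf (g '' Icc l α)) (sSup (g '' Icc l α)) :=
    hg.continuousOn.image_Icc hlα
  refine ⟨l, hl0, hlβ, ?_⟩
  rw [himg2]
  apply Icc_subset_Icc hlinf
  have : g ρ ∈ g '' Icc l α := ⟨ρ, ⟨le_trans hlβ hβρ, hρα⟩, rfl⟩
  exact le_trans hgρ (le_csSup (isCompact_Icc.image hg).bddAbove this)

noncomputable def mir (g : ℝ → ℝ) : ℝ → ℝ := fun x => 1 - g (1 - x)

lemma mir_iter {g : ℝ → ℝ} (n : ℕ) (x : ℝ) : (mir g)^[n] x = 1 - g^[n] (1 - x) := by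
  induction n generalizing x with
  | zero => simp
  | succ n ih =>
    rw [Function.iterate_succ_apply, Function.iterate_succ_apply, mir]
    rw [ih (1 - g (1 - x))]
    ring_nf

lemma mir_cont {g : ℝ → ℝ} (hg : Continuous g) : Continuous (mir g) := by
  unfold mir; fun_prop

lemma mir_mapsI {g : ℝ → ℝ} (hm : MapsI g) : MapsI (mir g) := by
  intro x hx
  have h1 : 1 - x ∈ Icc (0:ℝ) 1 := ⟨by linarith [hx.2], by linarith [hx.1]⟩
  have := hm _ h1
  exact ⟨by simp [mir]; linarith [this.2], by simp [mir]; linarith [this.1]⟩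

lemma mir_surjI {g : ℝ → ℝ} (hs : SurjI g) : SurjI (mir g) := by
  intro y hy
  obtain ⟨x, hx, hgx⟩ := hs (1 - y) ⟨by linarith [hy.2], by linarith [hy.1]⟩
  refine ⟨1 - x, ⟨by linarith [hx.2], by linarith [hx.1]⟩, ?_⟩
  simp [mir, hgx]

lemma mir_mix {g : ℝ → ℝ} (hmix : Mix g) : Mix (mir g) := by
  intro l₁ r₁ l₂ r₂ h1 h2 h3 h4 h5 h6
  obtain ⟨N, hN⟩ := hmix (1 - r₁) (1 - l₁) (1 - r₂) (1 - l₂)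
    (by linarith) (by linarith) (by linarith) (by linarith) (by linarith) (by linarith)
  refine ⟨N, fun n hn => ?_⟩
  obtain ⟨y, hy, hgy⟩ := hN n hn
  refine ⟨1 - y, ⟨by linarith [hy.2], by linarith [hy.1]⟩, ?_⟩
  rw [mir_iter]
  have : (1:ℝ) - (1 - y) = y := by ring
  rw [this]
  exact ⟨by linarith [hgy.2], by linarith [hgy.1]⟩

lemma mir_acc0 {g : ℝ → ℝ} (h : Acc1 g) : Acc0 (mir g) := by
  obtain ⟨p, h1, h2, k, hk⟩ := h
  refine ⟨1 - p, by linarith, by linarith, k, ?_⟩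
  rw [mir_iter]
  have : (1:ℝ) - (1 - p) = p := by ring
  rw [this, hk]; ring

lemma mir_image {g : ℝ → ℝ} (A : Set ℝ) :
    g '' ((fun x => 1 - x) '' A) = (fun x => 1 - x) '' (mir g '' A) := by
  rw [← image_comp, ← image_comp]
  apply image_congr
  intro x _
  simp [mir, Function.comp]

/-- classification of a non-accessible endpoint 0 -/
lemma classify0 {g : ℝ → ℝ} (hm : MapsI g) (hs : SurjI g) (hA : ¬ Acc0 g) :
    (g 0 = 0 ∧ ∀ x ∈ Icc (0:ℝ) 1, g x = 0 → x = 0) ∨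
    (g 0 = 1 ∧ g 1 = 0 ∧ ¬ Acc1 g ∧ (∀ x ∈ Icc (0:ℝ) 1, g x = 0 → x = 1) ∧
      (∀ x ∈ Icc (0:ℝ) 1, g x = 1 → x = 0)) := by
  have hz : ∀ x ∈ Icc (0:ℝ) 1, g x = 0 → x = 0 ∨ x = 1 := by
    intro x hx hgx
    by_contra h
    push_neg at h
    exact hA ⟨x, lt_of_le_of_ne hx.1 (Ne.symm h.1), lt_of_le_of_ne hx.2 h.2, 1, by
      simpa using hgx⟩
  obtain ⟨x₀, hx₀, hgx₀⟩ := hs 0 ⟨le_rfl, zero_le_one⟩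
  rcases hz x₀ hx₀ hgx₀ with h | h
  · -- g 0 = 0
    subst h
    left
    refine ⟨hgx₀, ?_⟩
    intro x hx hgx
    rcases hz x hx hgx with h | h
    · exact h
    · -- g 1 = 0 : derive contradiction
      exfalso
      subst h
      obtain ⟨y, hy, hgy⟩ := hs 1 ⟨le_rfl.trans zero_le_one, le_rfl⟩
      rcases (by
        intro hy01
        rcases hy01 with h' | h'
        · rw [h', hgx₀] at hgy; exact absurd hgy (by norm_num)
        · rw [h', hgx] at hgy; exact absurd hgy (by norm_num) :
          ¬ (y = 0 ∨ y = 1)) with _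
      · have hy0 : 0 < y := by
          rcases lt_or_eq_of_le hy.1 with h' | h'
          · exact h'
          · exfalso; rw [← h', hgx₀] at hgy; exact absurd hgy (by norm_num)
        have hy1 : y < 1 := by
          rcases lt_or_eq_of_le hy.2 with h' | h'
          · exact h'
          · exfalso; rw [h', hgx] at hgy; exact absurd hgy (by norm_num)
        exact hA ⟨y, hy0, hy1, 2, by simp [Function.iterate_succ_apply', hgy, hgx]⟩
  · -- g 1 = 0
    subst h
    right
    have hA1 : ¬ Acc1 g := by
      intro ⟨p, hp0, hp1, k, hk⟩
      exact hA ⟨p, hp0, hp1, k + 1, by rw [Function.iterate_succ_apply', hk, hgx₀]⟩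
    have hg0 : g 0 = 1 := by
      obtain ⟨y, hy, hgy⟩ := hs 1 ⟨le_rfl.trans zero_le_one, le_rfl⟩
      have hy01 : y = 0 ∨ y = 1 := by
        by_contra h
        push_neg at h
        exact hA1 ⟨y, lt_of_le_of_ne hy.1 (Ne.symm h.1), lt_of_le_of_ne hy.2 h.2, 1, by
          simpa using hgy⟩
      rcases hy01 with h | h
      · rw [← h]; exact hgy
      · exfalso; rw [h, hgx₀] at hgy; exact absurd hgy (by norm_num)
    refine ⟨hg0, hgx₀, hA1, ?_, ?_⟩
    · intro x hx hgx
      rcases hz x hx hgx with h | h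
      · exfalso; rw [h, hg0] at hgx; exact absurd hgx (by norm_num)
      · exact h
    · intro x hx hgx
      have hx01 : x = 0 ∨ x = 1 := by
        by_contra h
        push_neg at h
        exact hA1 ⟨x, lt_of_le_of_ne hx.1 (Ne.symm h.1), lt_of_le_of_ne hx.2 h.2, 1, by
          simpa using hgx⟩
      rcases hx01 with h | h
      · exact h
      · exfalso; rw [h, hgx₀] at hgx; exact absurd hgx (by norm_num)

lemma cont_bound {g : ℝ → ℝ} (hg : Continuous g) (p : ℝ) {η : ℝ} (hη : 0 < η) :
    ∃ δ > 0, ∀ x, |x - p| ≤ δ → |g x - g p| ≤ η := by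
  obtain ⟨δ, hδ, hd⟩ := Metric.continuousAt_iff.1 hg.continuousAt η hη
  refine ⟨δ/2, by positivity, fun x hx => ?_⟩
  have : dist x p < δ := by rw [Real.dist_eq]; linarith
  have := hd this
  rw [Real.dist_eq] at this
  linarith [this.le]

lemma kit0 {g : ℝ → ℝ} (hg : Continuous g) (hm : MapsI g) (hs : SurjI g) (hmix : Mix g)
    (h0 : g 0 = 0) (hz : ∀ x ∈ Icc (0:ℝ) 1, g x = 0 → x = 0)
    {e : ℝ} (he : 0 < e) (he2 : e < 1) :
    ∃ θ l : ℝ, 0 < l ∧ l ≤ θ ∧ 0 < θ ∧ 2*θ ≤ e ∧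
      (∀ x, 0 ≤ x → x ≤ θ → 0 ≤ g x ∧ g x ≤ e) ∧ Icc l e ⊆ g '' Icc l e := by
  obtain ⟨ρ, hρ0, hρe, hρlow, hgρ⟩ := rho_exists hg hm hmix hs h0 he he2
  obtain ⟨l, hl0, hlθ, hcov⟩ := gadget0 hg hm hmix hz he2 (by positivity : 0 < ρ/2)
    (by linarith) hρe hρ0 hgρ
  refine ⟨ρ/2, l, hl0, hlθ, by positivity, by linarith, ?_, hcov⟩
  intro x hx hxθ
  constructor
  · exact (hm x ⟨hx, by linarith⟩).1
  · exact hρlow x hx (by linarith)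

lemma kit1 {g : ℝ → ℝ} (hg : Continuous g) (hm : MapsI g) (hs : SurjI g) (hmix : Mix g)
    (h1 : g 1 = 1) (hz : ∀ x ∈ Icc (0:ℝ) 1, g x = 1 → x = 1)
    {e : ℝ} (he : 0 < e) (he2 : e < 1) :
    ∃ θ l : ℝ, 0 < l ∧ l ≤ θ ∧ 0 < θ ∧ 2*θ ≤ e ∧
      (∀ x, 1 - θ ≤ x → x ≤ 1 → 1 - e ≤ g x ∧ g x ≤ 1) ∧
      Icc (1-e) (1-l) ⊆ g '' Icc (1-e) (1-l) := by
  have h0m : mir g 0 = 0 := by simp [mir, h1]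
  have hzm : ∀ x ∈ Icc (0:ℝ) 1, mir g x = 0 → x = 0 := by
    intro x hx hmx
    have h1x : 1 - x ∈ Icc (0:ℝ) 1 := ⟨by linarith [hx.2], by linarith [hx.1]⟩
    have : g (1 - x) = 1 := by simp [mir] at hmx; linarith
    have := hz _ h1x this
    linarith
  obtain ⟨θ, l, hl0, hlθ, hθ0, hθe, hbnd, hcov⟩ :=
    kit0 (mir_cont hg) (mir_mapsI hm) (mir_surjI hs) (mir_mix hmix) h0m hzm he he2
  refine ⟨θ, l, hl0, hlθ, hθ0, hθe, ?_, ?_⟩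
  · intro x hx hx1
    have h1x0 : 0 ≤ 1 - x := by linarith
    have h1xθ : 1 - x ≤ θ := by linarith
    have := hbnd (1 - x) h1x0 h1xθ
    simp only [mir] at this
    have hxx : (1:ℝ) - (1 - x) = x := by ring
    rw [hxx] at this
    exact ⟨by linarith [this.2], by linarith [this.1]⟩
  · have step : (fun x => 1 - x) '' Icc l e ⊆ (fun x => 1 - x) '' (mir g '' Icc l e) :=
      image_mono hcov
    rw [← mir_image] at step
    have him : (fun x => 1 - x) '' Icc l e = Icc (1-e) (1-l) := by
      simpa using image_const_sub_Icc (1:ℝ) l e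
    rwa [him] at step

lemma comp_sq_iter {g : ℝ → ℝ} (n : ℕ) : (g ∘ g)^[n] = g^[2*n] := by
  have h2 : g ∘ g = g^[2] := by
    ext x; simp [Function.iterate_succ]
  rw [h2, ← Function.iterate_mul]

lemma mix_sq {g : ℝ → ℝ} (hmix : Mix g) : Mix (g ∘ g) := by
  intro l₁ r₁ l₂ r₂ h1 h2 h3 h4 h5 h6
  obtain ⟨N, hN⟩ := hmix l₁ r₁ l₂ r₂ h1 h2 h3 h4 h5 h6
  refine ⟨N, fun n hn => ?_⟩
  obtain ⟨x, hx, hgx⟩ := hN (2*n) (by omega)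
  exact ⟨x, hx, by rw [comp_sq_iter]; exact hgx⟩

lemma kitswap {g : ℝ → ℝ} (hg : Continuous g) (hm : MapsI g) (hs : SurjI g) (hmix : Mix g)
    (h01 : g 0 = 1) (h10 : g 1 = 0)
    (hz0 : ∀ x ∈ Icc (0:ℝ) 1, g x = 0 → x = 1) (hz1 : ∀ x ∈ Icc (0:ℝ) 1, g x = 1 → x = 0)
    {e : ℝ} (he : 0 < e) (he2 : e ≤ 1/32) :
    ∃ θ₀ θ₁ σ₀ l m₂ : ℝ, 0 < l ∧ 0 < θ₀ ∧ 0 < θ₁ ∧ l ≤ θ₀ ∧ 2*θ₀ ≤ σ₀ ∧ σ₀ ≤ e ∧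
      θ₁ ≤ e ∧ m₂ < 1 ∧
      (∀ x, 0 ≤ x → x ≤ θ₀ → g x ∈ Icc (1-θ₁) 1) ∧
      (∀ x, 1-θ₁ ≤ x → x ≤ 1 → g x ∈ Icc 0 σ₀) ∧
      (g '' Icc l σ₀ ⊆ Icc (1-e) m₂) ∧
      Icc l σ₀ ⊆ g '' (g '' Icc l σ₀) := by
  -- σ₀ : g '' [0,σ₀] ⊆ [1-e,1]
  obtain ⟨δ₀, hδ₀, hb₀⟩ := cont_bound hg 0 he
  set σ₀ := min δ₀ e with hσ₀def
  have hσ₀pos : 0 < σ₀ := lt_min hδ₀ he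
  have hσ₀e : σ₀ ≤ e := min_le_right _ _
  have hσ₀img : ∀ x, 0 ≤ x → x ≤ σ₀ → 1 - e ≤ g x ∧ g x ≤ 1 := by
    intro x hx hxσ
    have h1 : |g x - g 0| ≤ e := hb₀ x (by
      rw [sub_zero, abs_of_nonneg hx]; exact le_trans hxσ (min_le_left _ _))
    rw [h01] at h1
    have h2 := abs_le.1 h1
    constructor
    · linarith [h2.1]
    · exact (hm x ⟨hx, by linarith [he2, hxσ, hσ₀e]⟩).2
  -- θ₁ : g '' [1-θ₁,1] ⊆ [0,σ₀]
  obtain ⟨δ₁, hδ₁, hb₁⟩ := cont_bound hg 1 hσ₀pos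
  set θ₁ := min δ₁ e with hθ₁def
  have hθ₁pos : 0 < θ₁ := lt_min hδ₁ he
  have hθ₁e : θ₁ ≤ e := min_le_right _ _
  have hθ₁img : ∀ x, 1 - θ₁ ≤ x → x ≤ 1 → 0 ≤ g x ∧ g x ≤ σ₀ := by
    intro x hx hx1
    have h1 : |g x - g 1| ≤ σ₀ := hb₁ x (by
      rw [abs_of_nonpos (by linarith)]
      have := min_le_left δ₁ e; simp only [hθ₁def] at hx; linarith)
    rw [h10, sub_zero] at h1
    have h2 := abs_le.1 h1
    refine ⟨(hm x ⟨by linarith [hθ₁e, he2], hx1⟩).1, h2.2⟩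
  -- the square map
  set h : ℝ → ℝ := g ∘ g with hhdef
  have hhc : Continuous h := hg.comp hg
  have hhm : MapsI h := fun x hx => hm _ (hm x hx)
  have hhs : SurjI h := by
    intro y hy
    obtain ⟨x1, hx1, hgx1⟩ := hs y hy
    obtain ⟨x2, hx2, hgx2⟩ := hs x1 hx1
    exact ⟨x2, hx2, by simp [hhdef, Function.comp, hgx2, hgx1]⟩
  have hhmix : Mix h := mix_sq hmix
  have hh0 : h 0 = 0 := by simp [hhdef, Function.comp, h01, h10]
  have hhz : ∀ x ∈ Icc (0:ℝ) 1, h x = 0 → x = 0 := by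
    intro x hx hhx
    have h1 : g (g x) = 0 := hhx
    have h2 : g x = 1 := hz0 _ (hm x hx) h1
    exact hz1 _ hx h2
  have hσ₀1 : σ₀ < 1 := by linarith [hσ₀e, he2]
  obtain ⟨ρ, hρ0, hρσ, hρlow, hgρ⟩ := rho_exists hhc hhm hhmix hhs hh0 hσ₀pos hσ₀1
  -- β₀ : g '' [0,β₀] ⊆ [1-θ₁,1]
  obtain ⟨β₀, hβ₀, hbβ⟩ := cont_bound hg 0 hθ₁pos
  set θ₀ := min (ρ/2) β₀ with hθ₀def
  have hθ₀pos : 0 < θ₀ := lt_min (by positivity) hβ₀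
  have hθ₀img : ∀ x, 0 ≤ x → x ≤ θ₀ → g x ∈ Icc (1-θ₁) 1 := by
    intro x hx hxθ
    have h1 : |g x - g 0| ≤ θ₁ := hbβ x (by
      rw [sub_zero, abs_of_nonneg hx]; exact le_trans hxθ (min_le_right _ _))
    rw [h01] at h1
    have h2 := abs_le.1 h1
    constructor
    · linarith [h2.1]
    · refine (hm x ⟨hx, ?_⟩).2
      have hρ2 : θ₀ ≤ ρ/2 := min_le_left _ _
      linarith [hσ₀e, he2, hρσ]
  obtain ⟨l, hl0, hlθ, hcov⟩ := gadget0 hhc hhm hhmix hhz hσ₀1 hθ₀pos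
    (le_trans (min_le_left _ _) (by linarith)) hρσ hρ0 hgρ
  -- m₂
  have hlσ : l ≤ σ₀ := le_trans hlθ (le_trans (min_le_left _ _) (by linarith))
  set m₂ := sSup (g '' Icc l σ₀) with hm₂def
  have himg : g '' Icc l σ₀ = Icc (sInf (g '' Icc l σ₀)) m₂ := hg.continuousOn.image_Icc hlσ
  have hm₂mem : m₂ ∈ g '' Icc l σ₀ := by
    rw [himg]
    exact right_mem_Icc.2 (Real.sInf_le_sSup _ (isCompact_Icc.image hg).bddBelow
      (isCompact_Icc.image hg).bddAbove)
  obtain ⟨x₂, hx₂, hgx₂⟩ := hm₂mem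
  have hm₂lt : m₂ < 1 := by
    have hx₂I : x₂ ∈ Icc (0:ℝ) 1 := ⟨le_trans hl0.le hx₂.1, by linarith [hx₂.2, hσ₀1]⟩
    rcases lt_or_eq_of_le (hm _ hx₂I).2 with hlt | heq
    · rw [← hgx₂]; exact hlt
    · exfalso
      have := hz1 _ hx₂I heq
      rw [this] at hx₂
      exact absurd hx₂.1 (not_le.2 hl0)
  refine ⟨θ₀, θ₁, σ₀, l, m₂, hl0, hθ₀pos, hθ₁pos, hlθ, ?_, hσ₀e, hθ₁e, hm₂lt, hθ₀img, ?_, ?_, ?_⟩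
  · have := min_le_left (ρ/2) β₀; linarith [hρσ]
  · intro x hx hx1; exact ⟨(hθ₁img x hx hx1).1, (hθ₁img x hx hx1).2⟩
  · intro y hy
    obtain ⟨x, hx, rfl⟩ := hy
    constructor
    · exact (hσ₀img x (le_trans hl0.le hx.1) hx.2).1
    · exact le_csSup (isCompact_Icc.image hg).bddAbove ⟨x, hx, rfl⟩
  · have : Icc l σ₀ ⊆ h '' Icc l σ₀ := hcov
    rwa [hhdef, image_comp] at this

lemma mir_acc01 {g : ℝ → ℝ} (h : Acc0 (mir g)) : Acc1 g := by
  obtain ⟨p, h1, h2, k, hk⟩ := h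
  rw [mir_iter] at hk
  exact ⟨1 - p, by linarith, by linarith, k, by linarith⟩

lemma mir_acc10 {g : ℝ → ℝ} (h : Acc0 g) : Acc1 (mir g) := by
  obtain ⟨p, h1, h2, k, hk⟩ := h
  refine ⟨1 - p, by linarith, by linarith, k, ?_⟩
  rw [mir_iter]
  have : (1:ℝ) - (1 - p) = p := by ring
  rw [this, hk]; ring

lemma classify1 {g : ℝ → ℝ} (hm : MapsI g) (hs : SurjI g) (hA : ¬ Acc1 g) :
    (g 1 = 1 ∧ ∀ x ∈ Icc (0:ℝ) 1, g x = 1 → x = 1) ∨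
    (g 0 = 1 ∧ g 1 = 0 ∧ ¬ Acc0 g ∧ (∀ x ∈ Icc (0:ℝ) 1, g x = 0 → x = 1) ∧
      (∀ x ∈ Icc (0:ℝ) 1, g x = 1 → x = 0)) := by
  have hAm : ¬ Acc0 (mir g) := fun h => hA (mir_acc01 h)
  rcases classify0 (mir_mapsI hm) (mir_surjI hs) hAm with ⟨h0, hz⟩ | ⟨ha, hb, hc, hd, he⟩
  · left
    have hg1 : g 1 = 1 := by
      simp only [mir] at h0
      have : g (1 - 0) = 1 := by linarith
      simpa using this
    refine ⟨hg1, ?_⟩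
    intro x hx hgx
    have h1x : (1:ℝ) - x ∈ Icc (0:ℝ) 1 := ⟨by linarith [hx.2], by linarith [hx.1]⟩
    have : mir g (1 - x) = 0 := by
      simp only [mir]
      have hxx : (1:ℝ) - (1 - x) = x := by ring
      rw [hxx, hgx]; ring
    have := hz _ h1x this
    linarith
  · right
    have hg1 : g 1 = 0 := by simp only [mir] at ha; simpa using (by linarith : g (1 - 0) = 0)
    have hg0 : g 0 = 1 := by
      simp only [mir] at hb
      have : g (1 - 1) = 1 := by linarith
      simpa using this
    refine ⟨hg0, hg1, fun h => hc (mir_acc10 h), ?_, ?_⟩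
    · intro x hx hgx
      have h1x : (1:ℝ) - x ∈ Icc (0:ℝ) 1 := ⟨by linarith [hx.2], by linarith [hx.1]⟩
      have : mir g (1 - x) = 1 := by
        simp only [mir]
        have hxx : (1:ℝ) - (1 - x) = x := by ring
        rw [hxx, hgx]; ring
      have := he _ h1x this
      linarith
    · intro x hx hgx
      have h1x : (1:ℝ) - x ∈ Icc (0:ℝ) 1 := ⟨by linarith [hx.2], by linarith [hx.1]⟩
      have : mir g (1 - x) = 0 := by
        simp only [mir]
        have hxx : (1:ℝ) - (1 - x) = x := by ring
        rw [hxx, hgx]; ring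
      have := hd _ h1x this
      linarith

def Setup (g : ℝ → ℝ) (e lo hi δm : ℝ) (N₁ : ℕ) (region : Set ℝ)
    (mat : Set ℝ → ℝ → Prop) : Prop :=
  (0 < δm ∧ δm ≤ e) ∧ (0 ≤ lo ∧ lo ≤ 1/8 ∧ 7/8 ≤ hi ∧ hi ≤ 1) ∧ 1 ≤ N₁ ∧
  (∀ a b : ℝ, 0 ≤ a → a + δm ≤ b → b ≤ 1 → ∀ n ≥ N₁, Icc lo hi ⊆ g^[n] '' Icc a b) ∧
  (∀ K x, mat K x → II K ∧ K ⊆ Icc lo hi ∧ K ⊆ Icc (x - e) (x + e) ∧ K ⊆ Icc (0:ℝ) 1) ∧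
  (∀ K x, mat K x → ∃ J r, r ≤ 2 ∧ (∃ a' b' : ℝ, a' + δm ≤ b' ∧ J = Icc a' b') ∧
      J ⊆ Icc (0:ℝ) 1 ∧ g^[r] '' J ⊆ K) ∧
  (∀ y ∈ Icc (0:ℝ) 1, y ∈ region → ∃ K, mat K y) ∧
  (∀ K x, mat K x → g x ∈ region → ∃ K', mat K' (g x) ∧ K' ⊆ g '' K) ∧
  (∀ K x, mat K x → g x ∉ region → g x ∈ g '' K) ∧
  (∀ y ∈ Icc (0:ℝ) 1, y ∉ region → ∃ u v : ℝ, u ≤ y ∧ y ≤ v ∧ δm ≤ v - u ∧ lo ≤ u ∧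
      v ≤ hi ∧ y - e ≤ u ∧ v ≤ y + e ∧ 0 ≤ u ∧ v ≤ 1)

/-- setup for the non-swap cases, with degenerate thresholds (θ < 0) on accessible sides -/
lemma setup_nonswap {g : ℝ → ℝ} (hg : Continuous g) (hm : MapsI g) (hmix : Mix g)
    {e θ₀ l₀ θ₁ l₁ : ℝ} (he : 0 < e) (he2 : e ≤ 1/32)
    (hl₀ : 0 < l₀) (hl₁ : 0 < l₁)
    (h0c : (θ₀ < 0 ∧ Acc0 g) ∨ (l₀ ≤ θ₀ ∧ 0 < θ₀ ∧ 2*θ₀ ≤ e ∧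
      (∀ x, 0 ≤ x → x ≤ θ₀ → 0 ≤ g x ∧ g x ≤ e) ∧ Icc l₀ e ⊆ g '' Icc l₀ e))
    (h1c : (θ₁ < 0 ∧ Acc1 g) ∨ (l₁ ≤ θ₁ ∧ 0 < θ₁ ∧ 2*θ₁ ≤ e ∧
      (∀ x, 1 - θ₁ ≤ x → x ≤ 1 → 1 - e ≤ g x ∧ g x ≤ 1) ∧
      Icc (1-e) (1-l₁) ⊆ g '' Icc (1-e) (1-l₁))) :
    ∃ (lo hi δm : ℝ) (N₁ : ℕ) (region : Set ℝ) (mat : Set ℝ → ℝ → Prop),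
      Setup g e lo hi δm N₁ region mat := by
  set τ := min (min l₀ l₁) e with hτdef
  have hτpos : 0 < τ := lt_min (lt_min hl₀ hl₁) he
  have hτe : τ ≤ e := min_le_right _ _
  have hτl₀ : τ ≤ l₀ := le_trans (min_le_left _ _) (min_le_left _ _)
  have hτl₁ : τ ≤ l₁ := le_trans (min_le_left _ _) (min_le_right _ _)
  have hτhalf : τ < 1/2 := by linarith
  set δm := e/2 with hδmdef
  obtain ⟨lo, hi, N, hlo0, hloτ, hhiτ, hhi1, hloA, hhiA, hreach⟩ :=
    reach_full hg hmix (by positivity : 0 < δm) hτpos hτhalf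
  set K₀ : Set ℝ := Icc l₀ e with hK₀def
  set K₁ : Set ℝ := Icc (1-e) (1-l₁) with hK₁def
  refine ⟨lo, hi, δm, max N 1, Icc 0 θ₀ ∪ Icc (1-θ₁) 1,
    fun K x => (K = K₀ ∧ x ∈ Icc 0 θ₀) ∨ (K = K₁ ∧ x ∈ Icc (1-θ₁) 1),
    ⟨by positivity, by linarith⟩, ⟨hlo0, by linarith, by linarith, hhi1⟩,
    le_max_right _ _, ?_, ?_, ?_, ?_, ?_, ?_, ?_⟩
  · intro a b ha hab hb n hn
    exact hreach a b ha hab hb n (le_trans (le_max_left _ _) hn)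
  · -- h1
    rintro K x (⟨rfl, hx⟩ | ⟨rfl, hx⟩)
    · rcases h0c with ⟨hneg, _⟩ | ⟨h1, h2, h3, h4, h5⟩
      · exact absurd (le_trans hx.1 hx.2) (not_le.2 hneg)
      · have hle : l₀ ≤ e := by linarith
        refine ⟨II_Icc hle, Icc_subset_Icc (by linarith) (by linarith), ?_, ?_⟩
        · exact Icc_subset_Icc (by linarith [hx.2]) (by linarith [hx.1])
        · exact Icc_subset_Icc hl₀.le (by linarith)
    · rcases h1c with ⟨hneg, _⟩ | ⟨h1, h2, h3, h4, h5⟩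
      · exact absurd (le_trans hx.1 hx.2) (not_le.2 (by linarith))
      · have hle : 1 - e ≤ 1 - l₁ := by linarith
        refine ⟨II_Icc hle, Icc_subset_Icc (by linarith) (by linarith), ?_, ?_⟩
        · exact Icc_subset_Icc (by linarith [hx.2]) (by linarith [hx.1])
        · exact Icc_subset_Icc (by linarith) (by linarith)
  · -- hseed
    rintro K x (⟨rfl, hx⟩ | ⟨rfl, hx⟩)
    · rcases h0c with ⟨hneg, _⟩ | ⟨h1, h2, h3, h4, h5⟩
      · exact absurd (le_trans hx.1 hx.2) (not_le.2 hneg)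
      · refine ⟨K₀, 0, by omega, ⟨l₀, e, by simp only [hδmdef]; linarith, rfl⟩,
          Icc_subset_Icc hl₀.le (by linarith), by simp⟩
    · rcases h1c with ⟨hneg, _⟩ | ⟨h1, h2, h3, h4, h5⟩
      · exact absurd (le_trans hx.1 hx.2) (not_le.2 (by linarith))
      · refine ⟨K₁, 0, by omega, ⟨1-e, 1-l₁, by simp only [hδmdef]; linarith, rfl⟩,
          Icc_subset_Icc (by linarith) (by linarith), by simp⟩
  · -- h2
    rintro y hy (hy0 | hy1)
    · exact ⟨K₀, Or.inl ⟨rfl, hy0⟩⟩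
    · exact ⟨K₁, Or.inr ⟨rfl, hy1⟩⟩
  · -- h3
    rintro K x (⟨rfl, hx⟩ | ⟨rfl, hx⟩) hgx
    · rcases h0c with ⟨hneg, _⟩ | ⟨h1, h2, h3, h4, h5⟩
      · exact absurd (le_trans hx.1 hx.2) (not_le.2 hneg)
      · have hb := h4 x hx.1 hx.2
        rcases hgx with hgx | hgx
        · exact ⟨K₀, Or.inl ⟨rfl, hgx⟩, h5⟩
        · exfalso
          rcases h1c with ⟨hneg1, _⟩ | ⟨q1, q2, q3, q4, q5⟩
          · have := hgx.1; have := hgx.2; linarith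
          · have := hgx.1; linarith [hb.2]
    · rcases h1c with ⟨hneg, _⟩ | ⟨h1, h2, h3, h4, h5⟩
      · exact absurd (le_trans hx.1 hx.2) (not_le.2 (by linarith))
      · have hb := h4 x hx.1 hx.2
        rcases hgx with hgx | hgx
        · exfalso
          rcases h0c with ⟨hneg0, _⟩ | ⟨q1, q2, q3, q4, q5⟩
          · have := hgx.1; have := hgx.2; linarith
          · have := hgx.2; linarith [hb.1]
        · exact ⟨K₁, Or.inr ⟨rfl, hgx⟩, h5⟩
  · -- h4
    rintro K x (⟨rfl, hx⟩ | ⟨rfl, hx⟩) hgx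
    · rcases h0c with ⟨hneg, _⟩ | ⟨h1, h2, h3, h4, h5⟩
      · exact absurd (le_trans hx.1 hx.2) (not_le.2 hneg)
      · have hb := h4 x hx.1 hx.2
        have hgt : θ₀ < g x := by
          by_contra hle
          push_neg at hle
          exact hgx (Or.inl ⟨hb.1, hle⟩)
        exact h5 ⟨by linarith, hb.2⟩
    · rcases h1c with ⟨hneg, _⟩ | ⟨h1, h2, h3, h4, h5⟩
      · exact absurd (le_trans hx.1 hx.2) (not_le.2 (by linarith))
      · have hb := h4 x hx.1 hx.2
        have hgt : g x < 1 - θ₁ := by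
          by_contra hle
          push_neg at hle
          exact hgx (Or.inr ⟨hle, hb.2⟩)
        exact h5 ⟨hb.1, by linarith⟩
  · -- h5
    intro y hy hyr
    rcases le_or_gt y (1/2) with hc | hc
    · refine ⟨y, y + δm, le_rfl, by linarith, by linarith,
        ?_, by linarith, by linarith, by linarith, hy.1, by linarith [hy.1]⟩
      rcases h0c with ⟨hneg, hacc⟩ | ⟨h1, h2, h3, h4, h5⟩
      · rw [hloA hacc]; exact hy.1
      · have : θ₀ < y := by
          by_contra hle
          push_neg at hle
          exact hyr (Or.inl ⟨hy.1, hle⟩)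
        linarith
    · refine ⟨y - δm, y, by linarith, le_rfl, by linarith, by linarith, ?_,
        by linarith, by linarith, by linarith, hy.2⟩
      rcases h1c with ⟨hneg, hacc⟩ | ⟨h1, h2, h3, h4, h5⟩
      · rw [hhiA hacc]; exact hy.2
      · have : y < 1 - θ₁ := by
          by_contra hle
          push_neg at hle
          exact hyr (Or.inr ⟨hle, hy.2⟩)
        linarith

lemma setup_swap {g : ℝ → ℝ} (hg : Continuous g) (hm : MapsI g) (hs : SurjI g) (hmix : Mix g)
    (h01 : g 0 = 1) (h10 : g 1 = 0)
    (hz0 : ∀ x ∈ Icc (0:ℝ) 1, g x = 0 → x = 1) (hz1 : ∀ x ∈ Icc (0:ℝ) 1, g x = 1 → x = 0)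
    {e : ℝ} (he : 0 < e) (he2 : e ≤ 1/32) :
    ∃ (lo hi δm : ℝ) (N₁ : ℕ) (region : Set ℝ) (mat : Set ℝ → ℝ → Prop),
      Setup g e lo hi δm N₁ region mat := by
  obtain ⟨θ₀, θ₁, σ₀, l, m₂, hl0, hθ₀, hθ₁, hlθ, h2θσ, hσe, hθ₁e, hm₂, himg0, himg1, himgK, hcov⟩ :=
    kitswap hg hm hs hmix h01 h10 hz0 hz1 he he2
  have hm₂0 : 1 - e ≤ m₂ := by
    obtain ⟨y, hy⟩ : (g '' Icc l σ₀).Nonempty := ⟨g l, ⟨l, ⟨le_rfl, by linarith⟩, rfl⟩⟩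
    exact le_trans (himgK hy).1 (himgK hy).2
  set τ := min (min l (1-m₂)) θ₁ with hτdef
  have hτpos : 0 < τ := lt_min (lt_min hl0 (by linarith)) hθ₁
  have hτl : τ ≤ l := le_trans (min_le_left _ _) (min_le_left _ _)
  have hτm₂ : τ ≤ 1 - m₂ := le_trans (min_le_left _ _) (min_le_right _ _)
  have hτθ₁ : τ ≤ θ₁ := min_le_right _ _
  have hτe : τ ≤ e := by linarith [hτθ₁, hθ₁e]
  set δm := σ₀/2 with hδmdef
  have hδm : 0 < δm := by rw [hδmdef]; linarith
  obtain ⟨lo, hi, N, hlo0, hloτ, hhiτ, hhi1, hloA, hhiA, hreach⟩ :=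
    reach_full hg hmix hδm hτpos (by linarith : τ < 1/2)
  set K₀ : Set ℝ := Icc l σ₀ with hK₀def
  set K₀' : Set ℝ := g '' K₀ with hK₀'def
  have hlσ : l ≤ σ₀ := by linarith
  refine ⟨lo, hi, δm, max N 1, Icc 0 θ₀ ∪ Icc (1-θ₁) 1,
    fun K x => (K = K₀ ∧ x ∈ Icc 0 θ₀) ∨ (K = K₀' ∧ x ∈ Icc (1-θ₁) 1),
    ⟨hδm, by linarith⟩, ⟨hlo0, by linarith, by linarith, hhi1⟩,
    le_max_right _ _, ?_, ?_, ?_, ?_, ?_, ?_, ?_⟩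
  · intro a b ha hab hb n hn
    exact hreach a b ha hab hb n (le_trans (le_max_left _ _) hn)
  · -- h1
    rintro K x (⟨rfl, hx⟩ | ⟨rfl, hx⟩)
    · refine ⟨II_Icc hlσ, Icc_subset_Icc (by linarith) (by linarith), ?_, ?_⟩
      · exact Icc_subset_Icc (by linarith [hx.2]) (by linarith [hx.1])
      · exact Icc_subset_Icc hl0.le (by linarith)
    · refine ⟨II.image hg (II_Icc hlσ), ?_, ?_, ?_⟩
      · exact subset_trans himgK (Icc_subset_Icc (by linarith) (by linarith))
      · exact subset_trans himgK (Icc_subset_Icc (by linarith [hx.2]) (by linarith [hx.1]))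
      · exact subset_trans himgK (Icc_subset_Icc (by linarith) (by linarith))
  · -- hseed
    rintro K x (⟨rfl, hx⟩ | ⟨rfl, hx⟩)
    · exact ⟨K₀, 0, by omega, ⟨l, σ₀, by linarith, rfl⟩,
        Icc_subset_Icc hl0.le (by linarith), by simp⟩
    · refine ⟨K₀, 1, by omega, ⟨l, σ₀, by linarith, rfl⟩,
        Icc_subset_Icc hl0.le (by linarith), by simp [hK₀'def]⟩
  · -- h2
    rintro y hy (hy0 | hy1)
    · exact ⟨K₀, Or.inl ⟨rfl, hy0⟩⟩
    · exact ⟨K₀', Or.inr ⟨rfl, hy1⟩⟩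
  · -- h3
    rintro K x (⟨rfl, hx⟩ | ⟨rfl, hx⟩) hgx
    · exact ⟨K₀', Or.inr ⟨rfl, himg0 x hx.1 hx.2⟩, subset_rfl⟩
    · have hb := himg1 x hx.1 hx.2
      rcases hgx with hgx | hgx
      · refine ⟨K₀, Or.inl ⟨rfl, hgx⟩, ?_⟩
        have : g '' K₀' = g '' (g '' K₀) := rfl
        rw [this]
        exact hcov
      · exfalso
        have := hgx.1; have := hb.2; linarith
  · -- h4
    rintro K x (⟨rfl, hx⟩ | ⟨rfl, hx⟩) hgx
    · exact absurd (Or.inr (himg0 x hx.1 hx.2)) hgx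
    · have hb := himg1 x hx.1 hx.2
      have hgt : θ₀ < g x := by
        by_contra hle
        push_neg at hle
        exact hgx (Or.inl ⟨hb.1, hle⟩)
      have : g x ∈ K₀ := ⟨by linarith, hb.2⟩
      exact hcov this
  · -- h5
    intro y hy hyr
    rcases le_or_gt y (1/2) with hc | hc
    · refine ⟨y, y + δm, le_rfl, by linarith, by linarith, ?_, by linarith,
        by linarith, by linarith, hy.1, by linarith [hy.1]⟩
      have : θ₀ < y := by
        by_contra hle
        push_neg at hle
        exact hyr (Or.inl ⟨hy.1, hle⟩)
      linarith
    · refine ⟨y - δm, y, by linarith, le_rfl, by linarith, by linarith, ?_,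
        by linarith, by linarith, by linarith, hy.2⟩
      have : y < 1 - θ₁ := by
        by_contra hle
        push_neg at hle
        exact hyr (Or.inr ⟨hle, hy.2⟩)
      linarith

lemma setup {g : ℝ → ℝ} (hg : Continuous g) (hm : MapsI g) (hs : SurjI g) (hmix : Mix g)
    {e : ℝ} (he : 0 < e) (he2 : e ≤ 1/32) :
    ∃ (lo hi δm : ℝ) (N₁ : ℕ) (region : Set ℝ) (mat : Set ℝ → ℝ → Prop),
      Setup g e lo hi δm N₁ region mat := by
  have he1 : e < 1 := by linarith
  by_cases hA0 : Acc0 g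
  · by_cases hA1 : Acc1 g
    · exact setup_nonswap (θ₀ := -1) (l₀ := 1) (θ₁ := -1) (l₁ := 1) hg hm hmix he he2
        one_pos one_pos (Or.inl ⟨by norm_num, hA0⟩) (Or.inl ⟨by norm_num, hA1⟩)
    · rcases classify1 hm hs hA1 with ⟨h1, hz⟩ | ⟨_, _, hA0', _, _⟩
      · obtain ⟨θ₁, l₁, q1, q2, q3, q4, q5, q6⟩ := kit1 hg hm hs hmix h1 hz he he1
        exact setup_nonswap (θ₀ := -1) (l₀ := 1) hg hm hmix he he2 one_pos q1
          (Or.inl ⟨by norm_num, hA0⟩) (Or.inr ⟨q2, q3, q4, q5, q6⟩)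
      · exact absurd hA0 hA0'
  · rcases classify0 hm hs hA0 with ⟨h0, hz⟩ | ⟨ha, hb, hA1', hz0, hz1⟩
    · obtain ⟨θ₀, l₀, p1, p2, p3, p4, p5, p6⟩ := kit0 hg hm hs hmix h0 hz he he1
      by_cases hA1 : Acc1 g
      · exact setup_nonswap (θ₁ := -1) (l₁ := 1) hg hm hmix he he2 p1 one_pos
          (Or.inr ⟨p2, p3, p4, p5, p6⟩) (Or.inl ⟨by norm_num, hA1⟩)
      · rcases classify1 hm hs hA1 with ⟨h1, hz'⟩ | ⟨hga, _, _, _, _⟩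
        · obtain ⟨θ₁, l₁, q1, q2, q3, q4, q5, q6⟩ := kit1 hg hm hs hmix h1 hz' he he1
          exact setup_nonswap hg hm hmix he he2 p1 q1
            (Or.inr ⟨p2, p3, p4, p5, p6⟩) (Or.inr ⟨q2, q3, q4, q5, q6⟩)
        · rw [h0] at hga; exact absurd hga (by norm_num)
    · exact setup_swap hg hm hs hmix ha hb hz0 hz1 he he2

def Seed (g : ℝ → ℝ) (δm : ℝ) (D : Set ℝ) (r : ℕ) : Prop :=
  ∃ J : Set ℝ, (∃ a' b' : ℝ, a' + δm ≤ b' ∧ J = Icc a' b') ∧ J ⊆ Icc (0:ℝ) 1 ∧ g^[r] '' J ⊆ D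

lemma window {g : ℝ → ℝ} (hg : Continuous g) (hm : MapsI g)
    {e lo hi δm : ℝ} {N₁ : ℕ} {region : Set ℝ} {mat : Set ℝ → ℝ → Prop}
    (hset : Setup g e lo hi δm N₁ region mat) (he : 0 < e) (he2 : e ≤ 1/32)
    (x : ℕ → ℝ) (L : ℕ) (hx : ∀ t, t ≤ L → x t ∈ Icc (0:ℝ) 1)
    (horb : ∀ t, t < L → g (x t) = x (t+1)) :
    ∃ D : ℕ → Set ℝ,
      D 0 ⊆ Icc lo hi ∧
      (∀ t ≤ L, II (D t) ∧ D t ⊆ Icc (0:ℝ) 1 ∧ D t ⊆ Icc (x t - e) (x t + e)) ∧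
      (∀ t < L, D (t+1) ⊆ g '' D t) ∧
      (∃ r ≤ N₁ + 3, Seed g δm (D L) r) := by
  classical
  obtain ⟨⟨hδm0, hδme⟩, ⟨hlo0, hlo8, hhi8, hhi1⟩, hN1, hreach, h1, hseed, h2, h3, h4, h5⟩ := hset
  -- the builder for a new anchored interval inside T
  have build : ∀ (T : Set ℝ) (x' : ℝ) (Jf : Set ℝ) (rf : ℕ), II T → T ⊆ Icc (0:ℝ) 1 →
      x' ∈ T → rf ≤ N₁ + 3 → (∃ a' b' : ℝ, a' + δm ≤ b' ∧ Jf = Icc a' b') →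
      Jf ⊆ Icc (0:ℝ) 1 → (T ⊆ Icc (x' - e) (x' + e) → g^[rf] '' Jf ⊆ T) →
      ∃ Dn, II Dn ∧ Dn ⊆ T ∧ Dn ⊆ Icc (x' - e) (x' + e) ∧ Dn ⊆ Icc (0:ℝ) 1 ∧ x' ∈ Dn ∧
        ∃ r' ≤ N₁ + 3, Seed g δm Dn r' := by
    intro T x' Jf rf hIIT hT01 hx'T hrf hJfw hJf01 hJfsub
    by_cases hfull : T ⊆ Icc (x' - e) (x' + e)
    · exact ⟨T, hIIT, subset_rfl, hfull, hT01, hx'T,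
        rf, hrf, Jf, hJfw, hJf01, hJfsub hfull⟩
    · obtain ⟨c, d, hcd, hT⟩ := hIIT
      have hx'cd : x' ∈ Icc c d := hT ▸ hx'T
      obtain ⟨w, hwT, hwnb⟩ := not_subset.1 hfull
      set Dn := T ∩ Icc (x' - e) (x' + e) with hDndef
      have hDnII : II Dn := by
        rw [hDndef, hT, Icc_inter_Icc]
        exact II_Icc (le_trans (max_le hx'cd.1 (by linarith)) (le_min hx'cd.2 (by linarith)))
      have hx'Dn : x' ∈ Dn := ⟨hx'T, ⟨by linarith, by linarith⟩⟩
      have hwcd : w ∈ Icc c d := hT ▸ hwT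
      have hDnsub : Dn ⊆ T := inter_subset_left
      rw [mem_Icc, not_and_or] at hwnb
      push_neg at hwnb
      rcases hwnb with hw | hw
      · -- w < x' - e : segment on the left of x'
        have hseg : Icc (x' - e) x' ⊆ T := by
          rw [hT]; exact II_pair_subset (II_Icc hcd) hwcd hx'cd (by linarith) le_rfl
        refine ⟨Dn, hDnII, hDnsub, inter_subset_right, subset_trans hDnsub hT01, hx'Dn,
          0, by omega, Icc (x' - e) x', ⟨x' - e, x', by linarith, rfl⟩,
          subset_trans hseg hT01, ?_⟩
        simp only [Function.iterate_zero, image_id]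
        exact subset_inter hseg (Icc_subset_Icc le_rfl (by linarith))
      · -- x' + e < w
        have hseg : Icc x' (x' + e) ⊆ T := by
          rw [hT]; exact II_pair_subset (II_Icc hcd) hx'cd hwcd le_rfl (by linarith)
        refine ⟨Dn, hDnII, hDnsub, inter_subset_right, subset_trans hDnsub hT01, hx'Dn,
          0, by omega, Icc x' (x' + e), ⟨x', x' + e, by linarith, rfl⟩,
          subset_trans hseg hT01, ?_⟩
        simp only [Function.iterate_zero, image_id]
        exact subset_inter hseg (Icc_subset_Icc (by linarith) le_rfl)
  -- main induction with mode invariant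
  suffices h : ∀ Lc : ℕ, (∀ t, t ≤ Lc → x t ∈ Icc (0:ℝ) 1) → (∀ t, t < Lc → g (x t) = x (t+1)) →
      ∃ D : ℕ → Set ℝ,
        D 0 ⊆ Icc lo hi ∧
        (∀ t ≤ Lc, II (D t) ∧ D t ⊆ Icc (0:ℝ) 1 ∧ D t ⊆ Icc (x t - e) (x t + e)) ∧
        (∀ t < Lc, D (t+1) ⊆ g '' D t) ∧
        ((x Lc ∈ region ∧ mat (D Lc) (x Lc)) ∨
          (x Lc ∈ D Lc ∧ ∃ r ≤ N₁ + 3, Seed g δm (D Lc) r)) by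
    obtain ⟨D, hD0, hprops, hcov, hmode⟩ := h L hx horb
    refine ⟨D, hD0, hprops, hcov, ?_⟩
    rcases hmode with ⟨hxr, hmat⟩ | ⟨_, hrest⟩
    · obtain ⟨J, r, hr2, hJw, hJ01, hJsub⟩ := hseed _ _ hmat
      exact ⟨r, by omega, J, hJw, hJ01, hJsub⟩
    · exact hrest
  intro Lc
  induction Lc with
  | zero =>
    intro hx0 _
    by_cases hreg : x 0 ∈ region
    · obtain ⟨K, hK⟩ := h2 (x 0) (hx0 0 le_rfl) hreg
      obtain ⟨hKII, hKlohi, hKball, hK01⟩ := h1 _ _ hK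
      refine ⟨fun _ => K, hKlohi, ?_, by omega, Or.inl ⟨hreg, hK⟩⟩
      intro t ht
      have : t = 0 := by omega
      subst this
      exact ⟨hKII, hK01, hKball⟩
    · obtain ⟨u, v, hu1, hu2, hu3, hu4, hu5, hu6, hu7, hu8, hu9⟩ :=
        h5 (x 0) (hx0 0 le_rfl) hreg
      refine ⟨fun _ => Icc u v, Icc_subset_Icc hu4 hu5, ?_, by omega,
        Or.inr ⟨⟨hu1, hu2⟩, 0, by omega, Icc u v, ⟨u, v, by linarith, rfl⟩,
          Icc_subset_Icc hu8 hu9, by simp⟩⟩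
      intro t ht
      have : t = 0 := by omega
      subst this
      exact ⟨II_Icc (by linarith), Icc_subset_Icc hu8 hu9,
        Icc_subset_Icc (by linarith) (by linarith)⟩
  | succ L ih =>
    intro hxL horbL
    obtain ⟨D, hD0, hprops, hcov, hmode⟩ := ih (fun t ht => hxL t (by omega))
      (fun t ht => horbL t (by omega))
    have hgx : g (x L) = x (L + 1) := horbL L (by omega)
    have hx'I : x (L + 1) ∈ Icc (0:ℝ) 1 := hxL (L + 1) le_rfl
    have hDL := hprops L le_rfl
    have hTII : II (g '' D L) := II.image hg hDL.1
    have hT01 : g '' D L ⊆ Icc (0:ℝ) 1 := hm.image_subset hDL.2.1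
    -- produce the next set Dn together with its facts, by mode
    have hnext : ∃ Dn, II Dn ∧ Dn ⊆ g '' D L ∧ Dn ⊆ Icc (x (L+1) - e) (x (L+1) + e) ∧
        Dn ⊆ Icc (0:ℝ) 1 ∧
        ((x (L+1) ∈ region ∧ mat Dn (x (L+1))) ∨
          (x (L+1) ∈ Dn ∧ ∃ r ≤ N₁ + 3, Seed g δm Dn r)) := by
      rcases hmode with ⟨hxr, hmat⟩ | ⟨hxD, r, hrle, J, hJw, hJ01, hJsub⟩
      · by_cases hr' : x (L + 1) ∈ region
        · obtain ⟨K', hmat', hK'sub⟩ := h3 _ _ hmat (by rwa [hgx])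
          rw [hgx] at hmat'
          obtain ⟨hKII, hKlohi, hKball, hK01⟩ := h1 _ _ hmat'
          exact ⟨K', hKII, hK'sub, hKball, hK01, Or.inl ⟨hr', hmat'⟩⟩
        · have hcap : x (L + 1) ∈ g '' D L := by
            have := h4 _ _ hmat (by rwa [hgx])
            rwa [hgx] at this
          obtain ⟨J, r, hr2, hJw, hJ01, hJsub⟩ := hseed _ _ hmat
          obtain ⟨Dn, q1, q2, q3, q4, q5, q6⟩ := build (g '' D L) (x (L+1)) J (r+1)
            hTII hT01 hcap (by omega) hJw hJ01 (fun _ => by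
              rw [Function.iterate_succ', image_comp]
              exact image_mono hJsub)
          exact ⟨Dn, q1, q2, q3, q4, Or.inr ⟨q5, q6⟩⟩
      · -- anchored : first a bound on r
        have hrN : r < N₁ := by
          by_contra hge
          push_neg at hge
          obtain ⟨a', b', hab, rfl⟩ := hJw
          have ha0 : 0 ≤ a' := (hJ01 (left_mem_Icc.2 (by linarith))).1
          have hb1 : b' ≤ 1 := (hJ01 (right_mem_Icc.2 (by linarith))).2
          have hbig := hreach a' b' ha0 hab hb1 r hge
          have hsub2 : Icc lo hi ⊆ D L := subset_trans hbig hJsub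
          have hloD := hDL.2.2 (hsub2 (left_mem_Icc.2 (by linarith)))
          have hhiD := hDL.2.2 (hsub2 (right_mem_Icc.2 (by linarith)))
          have := hloD.1
          have := hhiD.2
          linarith [hloD.2, hhiD.1]
        have hcap : x (L + 1) ∈ g '' D L := by
          rw [← hgx]; exact mem_image_of_mem g hxD
        obtain ⟨Dn, q1, q2, q3, q4, q5, q6⟩ := build (g '' D L) (x (L+1)) J (r+1)
          hTII hT01 hcap (by omega) hJw hJ01 (fun _ => by
            rw [Function.iterate_succ', image_comp]
            exact image_mono hJsub)
        exact ⟨Dn, q1, q2, q3, q4, Or.inr ⟨q5, q6⟩⟩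
    obtain ⟨Dn, hDnII, hDnsub, hDnball, hDn01, hDnmode⟩ := hnext
    refine ⟨Function.update D (L+1) Dn, ?_, ?_, ?_, ?_⟩
    · rwa [Function.update_of_ne (by omega : (0:ℕ) ≠ L + 1)]
    · intro t ht
      by_cases h : t = L + 1
      · subst h
        rw [Function.update_self]
        exact ⟨hDnII, hDn01, hDnball⟩
      · rw [Function.update_of_ne h]
        exact hprops t (by omega)
    · intro t ht
      by_cases h : t + 1 = L + 1
      · have : t = L := by omega
        subst this
        rw [Function.update_self, Function.update_of_ne (by omega : t ≠ t + 1)]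
        exact hDnsub
      · rw [Function.update_of_ne h, Function.update_of_ne (by omega : t ≠ L + 1)]
        exact hcov t (by omega)
    · rw [Function.update_self]
      exact hDnmode

lemma seed_covers {g : ℝ → ℝ} {e lo hi δm : ℝ} {N₁ : ℕ} {region : Set ℝ}
    {mat : Set ℝ → ℝ → Prop} (hset : Setup g e lo hi δm N₁ region mat)
    {A : Set ℝ} {r : ℕ} (hseed : Seed g δm A r) {n : ℕ} (hn : N₁ ≤ n) :
    Icc lo hi ⊆ g^[n] '' A := by
  obtain ⟨J, ⟨a', b', hab, rfl⟩, hJ01, hJsub⟩ := hseed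
  have hδm0 : 0 < δm := hset.1.1
  have ha0 : 0 ≤ a' := (hJ01 (left_mem_Icc.2 (by linarith))).1
  have hb1 : b' ≤ 1 := (hJ01 (right_mem_Icc.2 (by linarith))).2
  have key : Icc lo hi ⊆ g^[n + r] '' Icc a' b' := hset.2.2.2.1 a' b' ha0 hab hb1 (n + r) (by omega)
  have himg : g^[n + r] '' Icc a' b' = g^[n] '' (g^[r] '' Icc a' b') := by
    rw [← image_comp, ← Function.iterate_add]
  refine subset_trans key ?_
  rw [himg]
  exact image_mono hJsub

lemma glue {g : ℝ → ℝ} (hg : Continuous g) (hm : MapsI g)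
    {e lo hi δm : ℝ} {N₁ : ℕ} {region : Set ℝ} {mat : Set ℝ → ℝ → Prop}
    (hset : Setup g e lo hi δm N₁ region mat) (he : 0 < e) (he2 : e ≤ 1/32)
    {C : ℕ → Set ℝ} {K₀ K₁ : ℕ} (hK : K₀ + N₁ ≤ K₁)
    (hCprop : ∀ k ≤ K₀, II (C k) ∧ C k ⊆ Icc (0:ℝ) 1)
    (hCseed : ∃ r ≤ N₁ + 3, Seed g δm (C K₀) r)
    (x : ℕ → ℝ) (L : ℕ) (hx : ∀ t, t ≤ L → x t ∈ Icc (0:ℝ) 1)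
    (horb : ∀ t, t < L → g (x t) = x (t+1)) :
    ∃ C' : ℕ → Set ℝ, (∀ k ≤ K₀, C' k = C k) ∧
      (∀ k ≤ K₁ + L, II (C' k) ∧ C' k ⊆ Icc (0:ℝ) 1) ∧
      (∀ k, K₀ ≤ k → k < K₁ + L → C' (k+1) ⊆ g '' C' k) ∧
      (∀ t ≤ L, C' (K₁ + t) ⊆ Icc (x t - e) (x t + e)) ∧
      (∃ r ≤ N₁ + 3, Seed g δm (C' (K₁ + L)) r) := by
  have hN1 : 1 ≤ N₁ := hset.2.2.1
  obtain ⟨D, hD0, hDprop, hDcov, hDseed⟩ := window hg hm hset he he2 x L hx horb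
  set C' : ℕ → Set ℝ := fun k =>
    if k ≤ K₀ then C k else if k < K₁ then g^[k - K₀] '' C K₀ else D (k - K₁) with hC'def
  have hK₀K₁ : K₀ < K₁ := by omega
  have hgap : ∀ k, K₀ < k → k < K₁ → C' k = g^[k - K₀] '' C K₀ := by
    intro k h1 h2
    simp only [hC'def, if_neg (by omega : ¬ k ≤ K₀), if_pos h2]
  have hwin : ∀ k, K₁ ≤ k → C' k = D (k - K₁) := by
    intro k h1
    simp only [hC'def, if_neg (by omega : ¬ k ≤ K₀), if_neg (by omega : ¬ k < K₁)]
  have hold : ∀ k, k ≤ K₀ → C' k = C k := by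
    intro k h1
    simp only [hC'def, if_pos h1]
  refine ⟨C', hold, ?_, ?_, ?_, ?_⟩
  · intro k hk
    rcases le_or_gt k K₀ with h | h
    · rw [hold k h]; exact hCprop k h
    · rcases lt_or_ge k K₁ with h2 | h2
      · rw [hgap k h h2]
        exact ⟨II.image (hg.iterate _) (hCprop K₀ le_rfl).1,
          ((hm.iter _).image_subset (hCprop K₀ le_rfl).2)⟩
      · rw [hwin k h2]
        have := hDprop (k - K₁) (by omega)
        exact ⟨this.1, this.2.1⟩
  · intro k hk1 hk2
    rcases lt_or_ge (k+1) K₁ with h2 | h2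
    · -- k+1 in the gap
      rw [hgap (k+1) (by omega) h2]
      rcases eq_or_lt_of_le hk1 with h3 | h3
      · rw [hold k h3.symm.le, ← h3,
          show K₀ + 1 - K₀ = 1 from by omega, Function.iterate_one]
      · rw [hgap k h3 (by omega),
          show k + 1 - K₀ = (k - K₀) + 1 from by omega, Function.iterate_succ', image_comp]
    · rcases eq_or_lt_of_le h2 with h3 | h3
      · -- k+1 = K₁ : junction into the window
        rw [hwin (k+1) h2, show k + 1 - K₁ = 0 from by omega]
        have hcover : Icc lo hi ⊆ g^[K₁ - K₀] '' C K₀ := by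
          obtain ⟨r, hr, hs⟩ := hCseed
          exact seed_covers hset hs (by omega)
        have himg : g '' C' k = g^[K₁ - K₀] '' C K₀ := by
          rcases eq_or_lt_of_le hk1 with h4 | h4
          · rw [hold k h4.symm.le, ← h4,
              show K₁ - K₀ = 1 from by omega, Function.iterate_one]
          · rw [hgap k h4 (by omega),
              show K₁ - K₀ = (k - K₀) + 1 from by omega, Function.iterate_succ', image_comp]
        rw [himg]
        exact subset_trans hD0 hcover
      · -- inside the window
        rw [hwin (k+1) (by omega), hwin k (by omega),
          show k + 1 - K₁ = (k - K₁) + 1 from by omega]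
        exact hDcov (k - K₁) (by omega)
  · intro t ht
    rw [hwin (K₁ + t) (by omega)]
    have : K₁ + t - K₁ = t := by omega
    rw [this]
    exact (hDprop t ht).2.2
  · obtain ⟨r, hr, hs⟩ := hDseed
    refine ⟨r, hr, ?_⟩
    rw [hwin (K₁ + L) (by omega)]
    have : K₁ + L - K₁ = L := by omega
    rw [this]
    exact hs

theorem core {g : ℝ → ℝ} (hg : Continuous g) (hm : MapsI g) (hs : SurjI g) (hmix : Mix g)
    {e : ℝ} (he : 0 < e) (he2 : e ≤ 1/32) :
    ∃ M : ℕ, 1 ≤ M ∧ ∀ (n : ℕ) (o : Fin (n+1) → ℕ → ℝ) (a b : Fin (n+1) → ℕ),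
      (∀ i j, o i j ∈ Icc (0:ℝ) 1) →
      (∀ i j, g (o i (j+1)) = o i j) →
      (∀ i, a i ≤ b i) →
      (∀ i : Fin n, b i.castSucc + M < a i.succ) →
      ∀ P : ℕ, M + b (Fin.last n) - a 0 < P →
      ∃ (p : ℝ) (c : ℕ), p ∈ Icc (0:ℝ) 1 ∧ g^[P] p = p ∧ 1 ≤ P ∧
        ∀ i : Fin (n+1), ∀ j, a i ≤ j → j ≤ b i →
          j ≤ c ∧ c - j < P ∧ |g^[c - j] p - o i j| ≤ e := by
  obtain ⟨lo, hi, δm, N₁, region, mat, hset⟩ := setup hg hm hs hmix he he2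
  have hδm0 : 0 < δm := hset.1.1
  have hδme : δm ≤ e := hset.1.2
  have hlo0 : 0 ≤ lo := hset.2.1.1
  have hlo8 : lo ≤ 1/8 := hset.2.1.2.1
  have hhi8 : 7/8 ≤ hi := hset.2.1.2.2.1
  have hhi1 : hi ≤ 1 := hset.2.1.2.2.2
  have hN1 : 1 ≤ N₁ := hset.2.2.1
  refine ⟨2*N₁ + 2, by omega, ?_⟩
  intro n o a b ho01 horb hab hgap P hP
  have hlohiII : II (Icc lo hi) := II_Icc (by linarith)
  have hlohi01 : Icc lo hi ⊆ Icc (0:ℝ) 1 := Icc_subset_Icc hlo0 hhi1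
  have hlohiSeed : Seed g δm (Icc lo hi) 0 :=
    ⟨Icc lo hi, ⟨lo, hi, by linarith, rfl⟩, hlohi01, by simp⟩
  -- ℕ-indexed versions of the data
  have hex : ∃ (A B : ℕ → ℕ) (O : ℕ → ℕ → ℝ),
      ∀ i : Fin (n+1), A i.val = a i ∧ B i.val = b i ∧ ∀ j, O i.val j = o i j := by
    refine ⟨fun i => a ⟨min i n, by omega⟩, fun i => b ⟨min i n, by omega⟩,
      fun i => o ⟨min i n, by omega⟩, ?_⟩
    intro i
    have heq : (⟨min i.val n, by omega⟩ : Fin (n+1)) = i := by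
      apply Fin.ext
      show min i.val n = i.val
      have := i.isLt
      omega
    refine ⟨?_, ?_, fun j => ?_⟩ <;>
      · simp only []
        rw [heq]
  obtain ⟨A, B, O, hABO⟩ := hex
  have hA : ∀ i : Fin (n+1), A i.val = a i := fun i => (hABO i).1
  have hB : ∀ i : Fin (n+1), B i.val = b i := fun i => (hABO i).2.1
  have hO : ∀ (i : Fin (n+1)) (j : ℕ), O i.val j = o i j := fun i => (hABO i).2.2
  have hA0 : A 0 = a 0 := hA 0
  have hBn : B n = b (Fin.last n) := hB (Fin.last n)
  have ho01' : ∀ i, i ≤ n → ∀ j, O i j ∈ Icc (0:ℝ) 1 := by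
    intro i hi j
    rw [show O i j = O (⟨i, by omega⟩ : Fin (n+1)).val j from rfl, hO]
    exact ho01 _ j
  have horb' : ∀ i, i ≤ n → ∀ j, g (O i (j+1)) = O i j := by
    intro i hi j
    rw [show O i (j+1) = O (⟨i, by omega⟩ : Fin (n+1)).val (j+1) from rfl, hO,
      show O i j = O (⟨i, by omega⟩ : Fin (n+1)).val j from rfl, hO]
    exact horb _ j
  have hab' : ∀ i, i ≤ n → A i ≤ B i := by
    intro i hi
    rw [show A i = A (⟨i, by omega⟩ : Fin (n+1)).val from rfl, hA,
      show B i = B (⟨i, by omega⟩ : Fin (n+1)).val from rfl, hB]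
    exact hab _
  have hstep : ∀ i, i < n → B i + (2*N₁+2) < A (i+1) := by
    intro i hi
    have hg1 := hgap ⟨i, hi⟩
    have e1 : b (Fin.castSucc ⟨i, hi⟩) = B i := by
      rw [show B i = B ((Fin.castSucc ⟨i, hi⟩) : Fin (n+1)).val from rfl, hB]
    have e2 : a (Fin.succ ⟨i, hi⟩) = A (i+1) := by
      rw [show A (i+1) = A ((Fin.succ ⟨i, hi⟩) : Fin (n+1)).val from rfl, hA]
    omega
  have hmono : ∀ i k, i ≤ k → k ≤ n → A i ≤ A k ∧ B i ≤ B k := by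
    intro i k
    induction k with
    | zero =>
      intro hik _
      have : i = 0 := by omega
      subst this
      exact ⟨le_rfl, le_rfl⟩
    | succ k ih =>
      intro hik hk1
      rcases Nat.lt_or_ge i (k+1) with hc | hc
      · have h1 := ih (by omega) (by omega)
        have h2 := hstep k (by omega)
        have h3 := hab' k (by omega)
        have h4 := hab' (k+1) (by omega)
        exact ⟨by omega, by omega⟩
      · have : i = k + 1 := by omega
        subst this
        exact ⟨le_rfl, le_rfl⟩
  have hPMa : 2*N₁ + 2 + B n < A 0 + P := by
    have h1 : A 0 ≤ B 0 := hab' 0 (by omega)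
    have h2 : B 0 ≤ B n := (hmono 0 n (by omega) le_rfl).2
    have hPa : 2*N₁ + 2 + B n - A 0 < P := by rw [hA0, hBn]; exact hP
    omega
  set c : ℕ := A 0 + (P - N₁) with hcdef
  have hcb : ∀ i, i ≤ n → B i + N₁ + 1 ≤ c := by
    intro i hi
    have h2 : B i ≤ B n := (hmono i n hi le_rfl).2
    omega
  have hca0 : c - A 0 = P - N₁ := by omega
  have hPN : N₁ + 1 ≤ P := by
    have h1 : A 0 ≤ B 0 := hab' 0 (by omega)
    have h2 : B 0 ≤ B n := (hmono 0 n (by omega) le_rfl).2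
    omega
  -- main induction over windows, processed from the last one down
  have main : ∀ ii, ii ≤ n → ∃ C : ℕ → Set ℝ,
      C 0 = Icc lo hi ∧
      (∀ k ≤ c - A (n - ii), II (C k) ∧ C k ⊆ Icc (0:ℝ) 1) ∧
      (∀ k < c - A (n - ii), C (k+1) ⊆ g '' C k) ∧
      (∀ i', i' ≤ n → n - ii ≤ i' → ∀ j, A i' ≤ j → j ≤ B i' →
        C (c - j) ⊆ Icc (O i' j - e) (O i' j + e)) ∧
      (∃ r ≤ N₁ + 3, Seed g δm (C (c - A (n - ii))) r) := by
    intro ii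
    induction ii with
    | zero =>
      intro _
      obtain ⟨C', hold, hprop, hcov, hwin, hseed'⟩ := glue hg hm hset he he2
        (C := fun _ => Icc lo hi) (K₀ := 0) (K₁ := c - B n)
        (by have := hcb n le_rfl; omega)
        (fun k _ => ⟨hlohiII, hlohi01⟩) ⟨0, by omega, hlohiSeed⟩
        (fun t => O n (B n - t)) (B n - A n)
        (fun t _ => ho01' n le_rfl _)
        (by
          intro t ht
          have h1 : B n - t = (B n - (t+1)) + 1 := by omega
          rw [h1]
          exact horb' n le_rfl _)
      have hKL : c - B n + (B n - A n) = c - A (n - 0) := by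
        have h1 := hab' n le_rfl
        have h2 := hcb n le_rfl
        have h3 : n - 0 = n := by omega
        rw [h3]
        omega
      refine ⟨C', by rw [hold 0 le_rfl], by rw [← hKL]; exact hprop, ?_, ?_, ?_⟩
      · intro k hk
        rw [← hKL] at hk
        exact hcov k (by omega) hk
      · intro i' hi'n hi' j haj hbj
        have hieq : i' = n := by omega
        rw [hieq] at haj hbj ⊢
        have ht : c - j = (c - B n) + (B n - j) := by
          have := hcb n le_rfl
          omega
        rw [ht]
        have hw := hwin (B n - j) (by omega)
        have hxval : O n (B n - (B n - j)) = O n j := by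
          congr 1
          omega
        rwa [hxval] at hw
      · rw [← hKL]; exact hseed'
    | succ ii ih =>
      intro hii
      obtain ⟨C, hC0, hCprop, hCcov, hCwin, hCseed⟩ := ih (by omega)
      have hioldeq : n - ii = (n - (ii+1)) + 1 := by omega
      have hgapK : (c - A (n - ii)) + N₁ ≤ c - B (n - (ii+1)) := by
        have h1 : B (n - (ii+1)) + (2*N₁+2) < A ((n - (ii+1)) + 1) := hstep _ (by omega)
        rw [← hioldeq] at h1
        have h2 := hcb (n - ii) (by omega)
        have h3 := hcb (n - (ii+1)) (by omega)
        have h4 := hab' (n - ii) (by omega)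
        omega
      obtain ⟨C', hold, hprop, hcov, hwin, hseed'⟩ := glue hg hm hset he he2
        (C := C) (K₀ := c - A (n - ii)) (K₁ := c - B (n - (ii+1)))
        hgapK (fun k hk => hCprop k hk) hCseed
        (fun t => O (n - (ii+1)) (B (n - (ii+1)) - t)) (B (n - (ii+1)) - A (n - (ii+1)))
        (fun t _ => ho01' _ (by omega) _)
        (by
          intro t ht
          have h1 : B (n - (ii+1)) - t = (B (n - (ii+1)) - (t+1)) + 1 := by omega
          rw [h1]
          exact horb' _ (by omega) _)
      have hKL : c - B (n - (ii+1)) + (B (n - (ii+1)) - A (n - (ii+1))) = c - A (n - (ii+1)) := by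
        have h1 := hab' (n - (ii+1)) (by omega)
        have h2 := hcb (n - (ii+1)) (by omega)
        omega
      refine ⟨C', by rw [hold 0 (by omega), hC0], by rw [← hKL]; exact hprop, ?_, ?_, ?_⟩
      · intro k hk
        rw [← hKL] at hk
        rcases Nat.lt_or_ge k (c - A (n - ii)) with hc | hc
        · rw [hold (k+1) (by omega), hold k (by omega)]
          exact hCcov k hc
        · exact hcov k hc hk
      · intro i' hi'n hi' j haj hbj
        rcases Nat.lt_or_ge i' (n - ii) with hc | hc
        · -- the new window
          have hieq : i' = n - (ii+1) := by omega
          rw [hieq] at haj hbj ⊢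
          have ht : c - j = (c - B (n - (ii+1))) + (B (n - (ii+1)) - j) := by
            have := hcb (n - (ii+1)) (by omega)
            omega
          rw [ht]
          have hw := hwin (B (n - (ii+1)) - j) (by omega)
          have hxval : O (n - (ii+1)) (B (n - (ii+1)) - (B (n - (ii+1)) - j)) =
              O (n - (ii+1)) j := by
            congr 1
            omega
          rwa [hxval] at hw
        · -- old windows
          have hja : A (n - ii) ≤ j := by
            have h1 : A (n - ii) ≤ A i' := (hmono (n - ii) i' hc hi'n).1
            omega
          have hpos : c - j ≤ c - A (n - ii) := by omega
          rw [hold (c - j) hpos]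
          exact hCwin i' hi'n (by omega) j haj hbj
      · rw [← hKL]; exact hseed'
  obtain ⟨C, hC0, hCprop, hCcov, hCwin, hCseed⟩ := main n le_rfl
  rw [show n - n = 0 from by omega] at hCprop hCcov hCseed
  -- extend the chain to time P with the free tail
  set CC : ℕ → Set ℝ := fun k => if k ≤ c - A 0 then C k else g^[k - (c - A 0)] '' C (c - A 0)
    with hCCdef
  have hCCold : ∀ k, k ≤ c - A 0 → CC k = C k := fun k hk => by simp [hCCdef, hk]
  have hCCnew : ∀ k, c - A 0 < k → CC k = g^[k - (c - A 0)] '' C (c - A 0) := fun k hk => by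
    simp [hCCdef, Nat.not_le.2 hk]
  have hCCprop : ∀ k ≤ P, II (CC k) ∧ CC k ⊆ Icc (0:ℝ) 1 := by
    intro k hk
    rcases le_or_gt k (c - A 0) with h | h
    · rw [hCCold k h]; exact hCprop k h
    · rw [hCCnew k h]
      exact ⟨II.image (hg.iterate _) (hCprop _ le_rfl).1,
        (hm.iter _).image_subset (hCprop _ le_rfl).2⟩
  have hCCcov : ∀ k < P, CC (k+1) ⊆ g '' CC k := by
    intro k hk
    rcases Nat.lt_or_ge k (c - A 0) with h | h
    · rw [hCCold (k+1) (by omega), hCCold k (by omega)]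
      exact hCcov k h
    · rcases Nat.eq_or_lt_of_le h with h2 | h2
      · rw [hCCnew (k+1) (by omega), hCCold k (by omega),
          show k + 1 - (c - A 0) = 1 from by omega, Function.iterate_one, ← h2]
      · rw [hCCnew (k+1) (by omega), hCCnew k h2,
          show k + 1 - (c - A 0) = (k - (c - A 0)) + 1 from by omega,
          Function.iterate_succ', image_comp]
  have hloop : CC 0 ⊆ CC P := by
    rw [hCCold 0 (by omega), hCCnew P (by omega), hC0,
      show P - (c - A 0) = N₁ from by omega]
    obtain ⟨r, hr, hsd⟩ := hCseed
    exact seed_covers hset hsd le_rfl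
  obtain ⟨p, hper, horbp⟩ := chain_periodic hg (fun k hk => (hCCprop k hk).1) hCCcov hloop
  have hp01 : p ∈ Icc (0:ℝ) 1 := by
    have h0 := horbp 0 (by omega)
    rw [hCCold 0 (by omega), hC0] at h0
    simp only [Function.iterate_zero, id_eq] at h0
    exact hlohi01 h0
  refine ⟨p, c, hp01, hper, by omega, ?_⟩
  intro i j haj hbj
  have hAi : A i.val = a i := hA i
  have hBi : B i.val = b i := hB i
  have hAmono : A 0 ≤ A i.val := (hmono 0 i.val (by omega) (by omega)).1
  have hjc : j ≤ c := by have := hcb i.val (by omega); omega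
  have hcjP : c - j < P := by omega
  refine ⟨hjc, hcjP, ?_⟩
  have hmem := horbp (c - j) (by omega)
  rw [hCCold (c - j) (by omega)] at hmem
  have hball := hCwin i.val (by omega) (by omega) j (by omega) (by omega) hmem
  rw [hO i j] at hball
  exact abs_le.2 ⟨by linarith [hball.1], by linarith [hball.2]⟩

end BlokhAux

def IsOrbit {X : Type*} (F : X → Set X) (o : ℕ → X) : Prop :=
  ∀ j : ℕ, o (j + 1) ∈ F (o j)

def SpecWith {X : Type*} [MetricSpace X] (F : X → Set X) (ε : ℝ) (M : ℕ) : Prop :=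
  ∀ (n : ℕ) (o : Fin (n + 1) → ℕ → X) (a b : Fin (n + 1) → ℕ),
    (∀ i, IsOrbit F (o i)) →
    (∀ i, a i ≤ b i) →
    (∀ i : Fin n, b i.castSucc + M < a i.succ) →
    ∀ P : ℕ, M + b (Fin.last n) - a 0 < P →
      ∃ z : ℕ → X, IsOrbit F z ∧ z P = z 0 ∧
        ∀ i : Fin (n + 1), ∀ j : ℕ, a i ≤ j → j ≤ b i → dist (z j) (o i j) < ε

def Specification {X : Type*} [MetricSpace X] (F : X → Set X) : Prop :=
  ∀ ε : ℝ, 0 < ε → ∃ M : ℕ, SpecWith F ε M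

def MixingSV {X : Type*} [MetricSpace X] (F : X → Set X) : Prop :=
  ∀ U V : Set X, IsOpen U → IsOpen V → U.Nonempty → V.Nonempty →
    ∃ M : ℕ, ∀ m : ℕ, M < m →
      ∃ x ∈ U, ∃ o : ℕ → X, o 0 = x ∧ IsOrbit F o ∧ o m ∈ V

/-- for the set-valued inverse `F = f⁻¹` of a continuous surjection
`f : [0,1] → [0,1]`, topological mixing is equivalent to the specification property. -/
theorem inverse_interval_map_mixing_iff_specification
    (f : Set.Icc (0 : ℝ) 1 → Set.Icc (0 : ℝ) 1)
    (hf : Continuous f) (hsurj : Function.Surjective f)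
    (F : Set.Icc (0 : ℝ) 1 → Set (Set.Icc (0 : ℝ) 1))
    (hF : ∀ x, F x = {y | f y = x}) :
    MixingSV F ↔ Specification F := by
  classical
  have hFmem : ∀ (ξ η : Set.Icc (0:ℝ) 1), η ∈ F ξ ↔ f η = ξ := by
    intro ξ η
    rw [hF]
    rfl
  set g : ℝ → ℝ := fun x => ((f (Set.projIcc 0 1 zero_le_one x)) : ℝ) with hgdef
  have hgc : Continuous g :=
    continuous_subtype_val.comp (hf.comp continuous_projIcc)
  have hval : ∀ ξ : Set.Icc (0:ℝ) 1, g ξ.val = (f ξ).val := by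
    intro ξ
    rw [hgdef]
    simp only []
    congr 1
    rw [Set.projIcc_of_mem zero_le_one ξ.2]
  have hgm : BlokhAux.MapsI g := by
    intro x hx
    exact (f (Set.projIcc 0 1 zero_le_one x)).2
  have hgs : BlokhAux.SurjI g := by
    intro y hy
    obtain ⟨ξ, hξ⟩ := hsurj ⟨y, hy⟩
    refine ⟨ξ.val, ξ.2, ?_⟩
    rw [hval, hξ]
  have horbit_val : ∀ (o : ℕ → Set.Icc (0:ℝ) 1), IsOrbit F o →
      ∀ j, g ((o (j+1)).val) = (o j).val := by
    intro o ho j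
    rw [hval]
    have := (hFmem (o j) (o (j+1))).1 (ho j)
    rw [this]
  have horbit_iter : ∀ (o : ℕ → Set.Icc (0:ℝ) 1), IsOrbit F o →
      ∀ j t, g^[t] ((o (j + t)).val) = (o j).val := by
    intro o ho j t
    induction t with
    | zero => simp
    | succ t ih =>
      rw [show j + (t+1) = (j + t) + 1 from rfl, Function.iterate_succ_apply,
        horbit_val o ho (j + t)]
      exact ih
  constructor
  · -- hard direction : mixing → specification
    intro hmix
    have hgmix : BlokhAux.Mix g := by
      intro l₁ r₁ l₂ r₂ h1 h2 h3 h4 h5 h6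
      set U : Set (Set.Icc (0:ℝ) 1) := {ξ | ξ.val ∈ Ioo l₂ r₂} with hUdef
      set V : Set (Set.Icc (0:ℝ) 1) := {ξ | ξ.val ∈ Ioo l₁ r₁} with hVdef
      have hUo : IsOpen U := isOpen_Ioo.preimage continuous_subtype_val
      have hVo : IsOpen V := isOpen_Ioo.preimage continuous_subtype_val
      have hUne : U.Nonempty := ⟨⟨(l₂+r₂)/2, by constructor <;> [linarith; linarith]⟩,
        by constructor <;> [linarith; linarith]⟩
      have hVne : V.Nonempty := ⟨⟨(l₁+r₁)/2, by constructor <;> [linarith; linarith]⟩,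
        by constructor <;> [linarith; linarith]⟩
      obtain ⟨M, hM⟩ := hmix U V hUo hVo hUne hVne
      refine ⟨M + 1, fun m hm => ?_⟩
      obtain ⟨x, hxU, o, ho0, horb, homV⟩ := hM m (by omega)
      refine ⟨(o m).val, homV, ?_⟩
      have := horbit_iter o horb 0 m
      simp only [Nat.zero_add] at this
      rw [this, ho0]
      exact hxU
    intro ε hε
    set e : ℝ := min (ε/2) (1/32) with hedef
    have he : 0 < e := lt_min (by linarith) (by norm_num)
    have he2 : e ≤ 1/32 := min_le_right _ _
    have heε : e < ε := lt_of_le_of_lt (min_le_left _ _) (by linarith)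
    obtain ⟨M, hM1, hcore⟩ := BlokhAux.core hgc hgm hgs hgmix he he2
    refine ⟨M, ?_⟩
    intro n o a b ho hab hgap P hP
    obtain ⟨p, c, hp01, hper, hP1, htrace⟩ := hcore n (fun i j => (o i j).val) a b
      (fun i j => (o i j).2) (fun i j => horbit_val (o i) (ho i) j) hab hgap P hP
    -- periodicity reduction
    have hperiter : ∀ s : ℕ, g^[s] p = g^[s % P] p := by
      intro s
      conv_lhs => rw [← Nat.mod_add_div s P]
      rw [Function.iterate_add_apply, Function.iterate_mul,
        Function.iterate_fixed hper]
    have hmod : ∀ j : ℕ, ((c + (j+1) * (P - 1)) % P + 1) % P = (c + j * (P - 1)) % P := by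
      intro j
      rw [Nat.mod_add_mod]
      have hsm : (j+1) * (P - 1) = j * (P - 1) + (P - 1) := by
        rw [Nat.succ_mul]
      rw [hsm, show c + (j * (P - 1) + (P - 1)) + 1 = (c + j * (P - 1)) + P from by omega]
      exact Nat.add_mod_right _ _
    refine ⟨fun j => ⟨g^[(c + j * (P - 1)) % P] p, (hgm.iter _) p hp01⟩, ?_, ?_, ?_⟩
    · intro j
      rw [hFmem]
      apply Subtype.ext
      rw [← hval]
      show g (g^[(c + (j+1) * (P - 1)) % P] p) = g^[(c + j * (P - 1)) % P] p
      rw [← Function.iterate_succ_apply' g _ p,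
        hperiter ((c + (j+1) * (P-1)) % P + 1), hmod j]
    · apply Subtype.ext
      show g^[(c + P * (P - 1)) % P] p = g^[(c + 0 * (P - 1)) % P] p
      rw [Nat.add_mul_mod_self_left]
      simp
    · intro i j haj hbj
      obtain ⟨hjc, hcjP, habs⟩ := htrace i j haj hbj
      have hkmj : (c + j * (P - 1)) % P = c - j := by
        have hj3 : j * P = j * (P - 1) + j := by
          calc j * P = j * ((P - 1) + 1) := by rw [show P - 1 + 1 = P from by omega]
            _ = j * (P - 1) + j := by rw [Nat.mul_succ]
        rw [show c + j * (P - 1) = (c - j) + j * P from by omega,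
          Nat.add_mul_mod_self_right]
        exact Nat.mod_eq_of_lt (by omega)
      rw [Subtype.dist_eq, Real.dist_eq]
      show |g^[(c + j * (P - 1)) % P] p - (o i j).val| < ε
      rw [hkmj]
      exact lt_of_le_of_lt habs heε
  · -- easy direction : specification → mixing
    intro hspec U V hUo hVo hUne hVne
    obtain ⟨u, hu⟩ := hUne
    obtain ⟨v, hv⟩ := hVne
    obtain ⟨εu, hεu, hballu⟩ := Metric.isOpen_iff.1 hUo u hu
    obtain ⟨εv, hεv, hballv⟩ := Metric.isOpen_iff.1 hVo v hv
    have hε : 0 < min εu εv := lt_min hεu hεv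
    obtain ⟨M, hM⟩ := hspec (min εu εv) hε
    have hborb : ∀ ξ : Set.Icc (0:ℝ) 1, ∃ o : ℕ → Set.Icc (0:ℝ) 1,
        o 0 = ξ ∧ IsOrbit F o := by
      intro ξ
      choose pre hpre using hsurj
      refine ⟨fun k => pre^[k] ξ, rfl, ?_⟩
      intro j
      rw [hFmem]
      simp only []
      rw [Function.iterate_succ_apply']
      exact hpre _
    refine ⟨M, fun m hm => ?_⟩
    obtain ⟨o₀, ho₀0, ho₀⟩ := hborb u
    obtain ⟨ow, how0, how⟩ := hborb v
    have ho₁orb : IsOrbit F (fun j => if j ≤ m then f^[m - j] v else ow (j - m)) := by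
      intro j
      rw [hFmem]
      simp only []
      rcases lt_trichotomy j m with hc | hc | hc
      · rw [if_pos (by omega : j + 1 ≤ m), if_pos (by omega : j ≤ m),
          show m - j = (m - (j+1)) + 1 from by omega, Function.iterate_succ_apply']
      · subst hc
        rw [if_neg (by omega : ¬ j + 1 ≤ j), if_pos (le_refl j),
          show j + 1 - j = 1 from by omega, Nat.sub_self]
        have h1 := (hFmem (ow 0) (ow 1)).1 (how 0)
        rw [h1, how0]
        simp
      · rw [if_neg (by omega : ¬ j + 1 ≤ m), if_neg (by omega : ¬ j ≤ m),
          show j + 1 - m = (j - m) + 1 from by omega]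
        exact (hFmem _ _).1 (how (j - m))
    have ho₁m : (fun j => if j ≤ m then f^[m - j] v else ow (j - m)) m = v := by
      simp
    obtain ⟨z, hzorb, hzper, hztr⟩ := hM 1
      (fun i => if i = 0 then o₀ else (fun j => if j ≤ m then f^[m - j] v else ow (j - m)))
      (fun i => if i = 0 then 0 else m) (fun i => if i = 0 then 0 else m)
      (by
        intro i
        by_cases hi : i = 0
        · simp only [hi, if_pos rfl]; exact ho₀
        · simp only [if_neg hi]; exact ho₁orb)
      (by intro i; by_cases hi : i = 0 <;> simp [hi])
      (by
        intro i
        have h0 : i.castSucc = (0 : Fin 2) := by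
          apply Fin.ext
          have := i.isLt
          simp only [Fin.coe_castSucc, Fin.val_zero]
          omega
        have h1 : i.succ ≠ (0 : Fin 2) := by
          intro hcon
          have := congrArg Fin.val hcon
          simp only [Fin.val_succ, Fin.val_zero] at this
          omega
        rw [h0]
        simp [h1]
        omega)
      (M + m + 1)
      (by
        have hlast : (Fin.last 1 : Fin 2) ≠ 0 := by decide
        simp [hlast])
    have hz0 : dist (z 0) u < min εu εv := by
      have h := hztr 0 0 (by simp) (by simp)
      simpa [ho₀0] using h
    have hzm : dist (z m) v < min εu εv := by
      have h1 : (1 : Fin 2) ≠ 0 := by decide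
      have h := hztr 1 m (by simp [h1]) (by simp [h1])
      simpa [h1] using h
    exact ⟨z 0, hballu (Metric.mem_ball.mpr (lt_of_lt_of_le hz0 (min_le_left _ _))),
      z, rfl, hzorb, hballv (Metric.mem_ball.mpr (lt_of_lt_of_le hzm (min_le_right _ _)))⟩
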